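/- arXiv:2401.02185 — 9 statements merged into one kernel-verified Lean document; each statement's English description precedes it below -/
import Mathlib

section
/- Let α be an injective orientation-preserving partial transformation of the chain Ω_n = {1,...,n} with image contained in a nonempty subset Y ⊆ Ω_n. Then α is a regular element of the semigroup POPI_n(Y) if and only if Im(α) = Yα (the image of Y under α). -/
open scoped Classical

namespace POPIpaper

/-- Partial transformations of `Ω_n = {1,…,n}`, modelled on `Fin n`. -/
abbrev PT (n : ℕ) := Fin n → Option (Fin n)

/-- Composition of partial transformations (apply `α` first, then `β`). -/
def comp {n : ℕ} (α β : PT n) : PT n := fun x => (α x).bind β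

/-- Domain of a partial transformation. -/
noncomputable def dom {n : ℕ} (α : PT n) : Finset (Fin n) :=
  Finset.univ.filter (fun x => (α x).isSome)

/-- Image of a partial transformation. -/
noncomputable def im {n : ℕ} (α : PT n) : Finset (Fin n) :=
  Finset.univ.filter (fun y => ∃ x, α x = some y)

/-- rank(α) = |Im(α)|. -/
noncomputable def rank {n : ℕ} (α : PT n) : ℕ := (im α).card

/-- Injectivity of a partial transformation. -/
def Inj {n : ℕ} (α : PT n) : Prop :=
  ∀ x y z : Fin n, α x = some z → α y = some z → x = y

/-- Orientation-preserving: the sequence of images, taken along the increasing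
enumeration of the domain, is cyclic, i.e. some rotation of it is sorted. -/
def OP {n : ℕ} (α : PT n) : Prop :=
  ∃ k : ℕ, (((List.finRange n).filterMap α).rotate k).Pairwise (· ≤ ·)

/-- The semigroup `POPI_n(Y)` as a set of partial transformations:
injective, orientation-preserving, with image contained in `Y`. -/
def POPI (n : ℕ) (Y : Finset (Fin n)) : Set (PT n) :=
  {α | Inj α ∧ OP α ∧ ∀ x y : Fin n, α x = some y → y ∈ Y}

/-- Regularity of `α` as an element of the subsemigroup `S`. -/
def IsRegularIn {n : ℕ} (S : Set (PT n)) (α : PT n) : Prop :=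
  ∃ β ∈ S, comp (comp α β) α = α

/-- The partial identity on a subset `A`. -/
def idp {n : ℕ} (A : Finset (Fin n)) : PT n :=
  fun x => if x ∈ A then some x else none

/-- Fixed points of a partial transformation. -/
noncomputable def fix {n : ℕ} (α : PT n) : Finset (Fin n) :=
  Finset.univ.filter (fun x => α x = some x)

/-- Green's relation ℒ on the set `S`: `S¹α = S¹β`. -/
def LRel {n : ℕ} (S : Set (PT n)) (α β : PT n) : Prop :=
  (α = β ∨ ∃ γ ∈ S, comp γ β = α) ∧ (β = α ∨ ∃ γ ∈ S, comp γ α = β)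

/-- Green's relation ℛ on the set `S`: `αS¹ = βS¹`. -/
def RRel {n : ℕ} (S : Set (PT n)) (α β : PT n) : Prop :=
  (α = β ∨ ∃ γ ∈ S, comp β γ = α) ∧ (β = α ∨ ∃ γ ∈ S, comp α γ = β)

/-- Green's relation ℋ = ℒ ∩ ℛ. -/
def HRel {n : ℕ} (S : Set (PT n)) (α β : PT n) : Prop :=
  LRel S α β ∧ RRel S α β

/-- Green's relation 𝒟 = ℒ ∘ ℛ. -/
def DRel {n : ℕ} (S : Set (PT n)) (α β : PT n) : Prop :=
  ∃ γ ∈ S, LRel S α γ ∧ RRel S γ β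

/-- `Φ` is a semigroup isomorphism from the subsemigroup `S` onto `T`. -/
def IsIso {n : ℕ} (S T : Set (PT n)) (Φ : PT n → PT n) : Prop :=
  Set.BijOn Φ S T ∧ ∀ a ∈ S, ∀ b ∈ S, Φ (comp a b) = comp (Φ a) (Φ b)

/-- The product `β * l₁ * ⋯ * l_k` of a nonempty list of partial transformations. -/
def prodList {n : ℕ} (β : PT n) (l : List (PT n)) : PT n := l.foldl comp β


/-- AUX: a permutation with strictly sorted key-map is unique. -/
theorem aux_eq_of_perm_of_sorted_map {A K : Type*} [LinearOrder K] (f : A → K) :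
    ∀ {l₁ l₂ : List A}, l₁.Perm l₂ → (l₁.map f).Pairwise (· < ·) →
      (l₂.map f).Pairwise (· < ·) → l₁ = l₂ := by
  intro l₁
  induction l₁ with
  | nil => intro l₂ h _ _; exact h.nil_eq
  | cons p t ih =>
    intro l₂ h s₁ s₂
    cases l₂ with
    | nil => exact absurd h.symm.nil_eq (by simp)
    | cons q t₂ =>
      have hpq : p = q := by
        by_contra hne
        have hp : p ∈ q :: t₂ := h.mem_iff.mp List.mem_cons_self
        have hq : q ∈ p :: t := h.mem_iff.mpr List.mem_cons_self
        have hp' : p ∈ t₂ := by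
          rcases List.mem_cons.mp hp with h1 | h1
          · exact absurd h1 hne
          · exact h1
        have hq' : q ∈ t := by
          rcases List.mem_cons.mp hq with h1 | h1
          · exact absurd h1.symm hne
          · exact h1
        have h1 : f q < f p :=
          List.rel_of_pairwise_cons s₂ (List.mem_map_of_mem hp')
        have h2 : f p < f q :=
          List.rel_of_pairwise_cons s₁ (List.mem_map_of_mem hq')
        exact absurd h1 (lt_asymm h2)
      subst hpq
      have ht : t = t₂ :=
        ih h.cons_inv (List.pairwise_cons.mp s₁).2 (List.pairwise_cons.mp s₂).2
      rw [ht]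

/-- AUX: filterMap that returns its input when defined equals filter. -/
theorem aux_filterMap_const {A B : Type*} (h : A → Option B) (l : List A) :
    l.filterMap (fun x => (h x).map (fun _ => x)) = l.filter (fun x => (h x).isSome) := by
  induction l with
  | nil => rfl
  | cons a l ih =>
    cases hh : h a <;> simp [List.filterMap_cons, List.filter_cons, hh, ih]

/-- AUX: the inverse of an injective orientation-preserving partial map is OP. -/
theorem aux_OP_inv {n : ℕ} (α β : PT n) (hinj : Inj α)
    (hab : ∀ x z : Fin n, α x = some z ↔ β z = some x) (hop : OP α) : OP β := by
  classical
  set f : Fin n → Option (Fin n × Fin n) := fun x => (α x).map (fun z => (x, z)) with hf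
  set g : Fin n → Option (Fin n × Fin n) := fun z => (β z).map (fun x => (x, z)) with hg
  set P := (List.finRange n).filterMap f with hPdef
  set Q := (List.finRange n).filterMap g with hQdef
  have hmemP : ∀ p : Fin n × Fin n, p ∈ P ↔ α p.1 = some p.2 := by
    rintro ⟨x, z⟩
    simp only [hPdef, List.mem_filterMap, hf, Option.map_eq_some_iff, List.mem_finRange, true_and]
    constructor
    · rintro ⟨a, b, h1, h2⟩
      obtain ⟨h3, h4⟩ := Prod.mk.injEq .. ▸ h2
      subst h3; subst h4; exact h1
    · intro h1; exact ⟨x, z, h1, rfl⟩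
  have hmemQ : ∀ p : Fin n × Fin n, p ∈ Q ↔ α p.1 = some p.2 := by
    rintro ⟨x, z⟩
    simp only [hQdef, List.mem_filterMap, hg, Option.map_eq_some_iff, List.mem_finRange, true_and]
    constructor
    · rintro ⟨a, b, h1, h2⟩
      obtain ⟨h3, h4⟩ := Prod.mk.injEq .. ▸ h2
      subst h3; subst h4; exact (hab _ _).mpr h1
    · intro h1; exact ⟨z, x, (hab _ _).mp h1, rfl⟩
  -- map fst / snd computations
  have hPfst : P.map Prod.fst = (List.finRange n).filter (fun x => (α x).isSome) := by
    rw [hPdef, List.map_filterMap]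
    have : (fun x => Option.map Prod.fst (f x)) = fun x => (α x).map (fun _ => x) := by
      funext x; cases hx : α x <;> simp [hf, hx]
    rw [this, aux_filterMap_const]
  have hPsnd : P.map Prod.snd = (List.finRange n).filterMap α := by
    rw [hPdef, List.map_filterMap]
    congr 1; funext x; cases hx : α x <;> simp [hf, hx]
  have hQfst : Q.map Prod.fst = (List.finRange n).filterMap β := by
    rw [hQdef, List.map_filterMap]
    congr 1; funext z; cases hz : β z <;> simp [hg, hz]
  have hQsnd : Q.map Prod.snd = (List.finRange n).filter (fun z => (β z).isSome) := by
    rw [hQdef, List.map_filterMap]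
    have : (fun z => Option.map Prod.snd (g z)) = fun z => (β z).map (fun _ => z) := by
      funext z; cases hz : β z <;> simp [hg, hz]
    rw [this, aux_filterMap_const]
  -- sortedness of the key maps
  have hPfst_s : (P.map Prod.fst).Pairwise (· < ·) := by
    rw [hPfst]; exact (List.pairwise_lt_finRange n).filter _
  have hQsnd_s : (Q.map Prod.snd).Pairwise (· < ·) := by
    rw [hQsnd]; exact (List.pairwise_lt_finRange n).filter _
  have hPnd : P.Nodup := List.Nodup.of_map Prod.fst (hPfst_s.imp ne_of_lt)
  have hQnd : Q.Nodup := List.Nodup.of_map Prod.snd (hQsnd_s.imp ne_of_lt)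
  have hQPperm : Q.Perm P := by
    refine List.perm_of_nodup_nodup_toFinset_eq hQnd hPnd ?_
    ext p; simp only [List.mem_toFinset, hmemP, hmemQ]
  obtain ⟨k, hk⟩ := hop
  rcases eq_or_ne P [] with hP0 | hP0
  · have hQ0 : Q = [] := by rw [hP0] at hQPperm; exact hQPperm.eq_nil
    refine ⟨0, ?_⟩
    have : (List.finRange n).filterMap β = [] := by rw [← hQfst, hQ0]; rfl
    rw [this]; simp
  · have ht : 0 < P.length := List.length_pos_iff.mpr hP0
    set t := P.length with htdef
    set k' := k % t with hk'def
    have hk't : k' < t := Nat.mod_lt _ ht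
    -- the sorted rotation of the α-list, strictly
    have hndLα : ((List.finRange n).filterMap α).Nodup := by
      refine List.Nodup.filterMap ?_ (List.nodup_finRange n)
      intro a a' b hb hb'
      exact hinj a a' b (Option.mem_def.mp hb) (Option.mem_def.mp hb')
    have hklt : (((List.finRange n).filterMap α).rotate k).Pairwise (· < ·) :=
      (hk.sortedLE.sortedLT_of_nodup (List.nodup_rotate.mpr hndLα)).pairwise
    have hlen : (P.map Prod.snd).length = t := by rw [List.length_map]
    have hProt : ((P.rotate k').map Prod.snd).Pairwise (· < ·) := by
      rw [List.map_rotate, hk'def, ← hlen, List.rotate_mod, hPsnd]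
      exact hklt
    have hQeq : Q = P.rotate k' :=
      aux_eq_of_perm_of_sorted_map Prod.snd
        (hQPperm.trans (List.rotate_perm P k').symm) hQsnd_s hProt
    refine ⟨t - k', ?_⟩
    have h1 : (List.finRange n).filterMap β = (P.map Prod.fst).rotate k' := by
      rw [← hQfst, hQeq, List.map_rotate]
    rw [h1, List.rotate_rotate, Nat.add_sub_cancel' (le_of_lt hk't)]
    have hlen2 : (P.map Prod.fst).length = t := by rw [List.length_map]
    rw [← hlen2, List.rotate_length]
    exact hPfst_s.imp le_of_lt


/-- `α ∈ POPI_n(Y)` is regular iff `Im(α) = Yα`. -/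
theorem regular_iff_im_eq_Yalpha {n : ℕ} (Y : Finset (Fin n)) (hY : Y.Nonempty)
    (α : PT n) (hα : α ∈ POPI n Y) :
    IsRegularIn (POPI n Y) α ↔
      im α = Finset.univ.filter (fun z => ∃ x ∈ Y, α x = some z) := by
  classical
  obtain ⟨hinj, hop, himY⟩ := hα
  constructor
  · rintro ⟨β, ⟨hβinj, hβop, hβY⟩, heq⟩
    ext z
    simp only [im, Finset.mem_filter, Finset.mem_univ, true_and]
    constructor
    · rintro ⟨x, hx⟩
      have hx' := congrFun heq x
      simp only [comp, hx, Option.bind_some] at hx'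
      cases hβz : β z with
      | none => rw [hβz] at hx'; simp at hx'
      | some w =>
        rw [hβz] at hx'
        simp only [Option.bind_some] at hx'
        exact ⟨w, hβY z w hβz, hx'⟩
    · rintro ⟨x, _, hx⟩; exact ⟨x, hx⟩
  · intro him
    set β : PT n := fun z => if h : ∃ x, α x = some z then some h.choose else none with hβ
    have hβval : ∀ z, β z = if h : ∃ x, α x = some z then some h.choose else none :=
      fun z => rfl
    have hab : ∀ x z : Fin n, α x = some z ↔ β z = some x := by
      intro x z
      constructor
      · intro h
        have he : ∃ x, α x = some z := ⟨x, h⟩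
        have hc : he.choose = x := hinj _ _ _ he.choose_spec h
        rw [hβval z, dif_pos he, hc]
      · intro h
        rw [hβval z] at h
        by_cases he : ∃ x, α x = some z
        · rw [dif_pos he] at h
          have := he.choose_spec
          rwa [Option.some_inj.mp h] at this
        · rw [dif_neg he] at h; exact absurd h (by simp)
    refine ⟨β, ⟨?_, ?_, ?_⟩, ?_⟩
    · intro z z' x h h'
      have h1 := (hab x z).mpr h
      have h2 := (hab x z').mpr h'
      rw [h1] at h2
      exact Option.some_inj.mp h2
    · exact aux_OP_inv α β hinj hab hop
    · intro z x h
      have hαx : α x = some z := (hab x z).mpr h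
      have hz : z ∈ Finset.univ.filter (fun z => ∃ x ∈ Y, α x = some z) := by
        rw [← him]
        simp only [im, Finset.mem_filter, Finset.mem_univ, true_and]
        exact ⟨x, hαx⟩
      simp only [Finset.mem_filter, Finset.mem_univ, true_and] at hz
      obtain ⟨x', hx'Y, hx'⟩ := hz
      rwa [hinj x x' z hαx hx']
    · funext x
      cases hx : α x with
      | none => simp [comp, hx]
      | some z =>
        have hbz : β z = some x := (hab x z).mp hx
        simp [comp, hx, hbz]

end POPIpaper
end

section
/- Let α be an injective orientation-preserving partial transformation of Ω_n with image contained in Y ⊆ Ω_n (Y nonempty). Then α is a regular element of POPI_n(Y) if and only if Dom(α) ⊆ Y. -/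
open scoped Classical

namespace POPIpaper

lemma filterMap_eq_map_filter {n : ℕ} [Inhabited (Fin n)] (γ : PT n) (l : List (Fin n)) :
    l.filterMap γ = (l.filter (fun x => (γ x).isSome)).map (fun x => (γ x).iget) := by
  induction l with
  | nil => simp
  | cons a l ih => cases h : γ a <;> simp [h, ih]

lemma op_inv {n : ℕ} [Inhabited (Fin n)] (α β : PT n) (hinj : Inj α)
    (hβα : ∀ x y, α x = some y → β y = some x)
    (hαβ : ∀ x y, β y = some x → α x = some y)
    (hop : OP α) : OP β := by
  classical
  obtain ⟨k, hk⟩ := hop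
  set f : Fin n → Fin n := fun x => (α x).iget with hf
  set g : Fin n → Fin n := fun y => (β y).iget with hg
  set D : List (Fin n) := (List.finRange n).filter (fun x => (α x).isSome) with hD
  set E : List (Fin n) := (List.finRange n).filter (fun y => (β y).isSome) with hE
  have hLα : (List.finRange n).filterMap α = D.map f := filterMap_eq_map_filter α _
  have hLβ : (List.finRange n).filterMap β = E.map g := filterMap_eq_map_filter β _
  have hDmem : ∀ x ∈ D, (α x).isSome := by
    intro x hx
    simpa [hD, List.mem_filter] using hx
  have hEmem : ∀ y ∈ E, (β y).isSome := by
    intro y hy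
    simpa [hE, List.mem_filter] using hy
  have hfx : ∀ x y, α x = some y → f x = y := by
    intro x y h; simp [hf, h]
  have hgy : ∀ x y, β y = some x → g y = x := by
    intro x y h; simp [hg, h]
  -- D nodup, E nodup
  have hDnd : D.Nodup := (List.nodup_finRange n).filter _
  have hEnd : E.Nodup := (List.nodup_finRange n).filter _
  -- (D.map f) nodup
  have hmapnd : (D.map f).Nodup := by
    refine hDnd.map_on ?_
    intro x hx y hy hxy
    obtain ⟨zx, hzx⟩ := Option.isSome_iff_exists.mp (hDmem x hx)
    obtain ⟨zy, hzy⟩ := Option.isSome_iff_exists.mp (hDmem y hy)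
    rw [hfx x zx hzx, hfx y zy hzy] at hxy
    exact hinj x y zy (hxy ▸ hzx) hzy
  -- (D.map f).rotate k is a perm of E
  have hperm : List.Perm ((D.map f).rotate k) E := by
    refine List.perm_of_nodup_nodup_toFinset_eq
      (List.nodup_rotate.mpr hmapnd) hEnd ?_
    ext y
    simp only [List.mem_toFinset, List.mem_rotate, List.mem_map]
    constructor
    · rintro ⟨x, hx, rfl⟩
      obtain ⟨z, hz⟩ := Option.isSome_iff_exists.mp (hDmem x hx)
      rw [hfx x z hz]
      simp [hE, List.mem_filter, List.mem_finRange]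
      rw [hβα x z hz]; simp
    · intro hy
      obtain ⟨x, hx⟩ := Option.isSome_iff_exists.mp (hEmem y hy)
      refine ⟨x, ?_, hfx x y (hαβ x y hx)⟩
      simp [hD, List.mem_filter, List.mem_finRange, hαβ x y hx]
  have hEsorted : E.Pairwise (· ≤ ·) := (List.pairwise_le_finRange n).filter _
  have hkeq : (D.map f).rotate k = E := by
    refine List.Perm.eq_of_pairwise' ?_ hEsorted hperm
    rwa [hLα] at hk
  -- now L_β = E.map g = D.rotate k
  have hLβD : (List.finRange n).filterMap β = D.rotate k := by
    rw [hLβ, ← hkeq, ← List.map_rotate, List.map_map]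
    refine List.map_congr_left ?_ |>.trans (List.map_id _)
    intro x hx
    rw [List.mem_rotate] at hx
    obtain ⟨z, hz⟩ := Option.isSome_iff_exists.mp (hDmem x hx)
    simp only [Function.comp_apply, id]
    rw [hfx x z hz, hgy x z (hβα x z hz)]
  have hDsorted : D.Pairwise (· ≤ ·) := (List.pairwise_le_finRange n).filter _
  rcases Nat.eq_zero_or_pos D.length with hlen | hlen
  · refine ⟨0, ?_⟩
    rw [hLβD, List.eq_nil_of_length_eq_zero hlen]
    simp
  · refine ⟨D.length - k % D.length, ?_⟩
    rw [hLβD, List.rotate_rotate]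
    have hdm := Nat.div_add_mod k D.length
    have h1 : k % D.length < D.length := Nat.mod_lt _ hlen
    have heq : k + (D.length - k % D.length) = D.length * (k / D.length + 1) := by
      rw [Nat.mul_add, Nat.mul_one]
      omega
    rw [heq, List.rotate_length_mul]
    exact hDsorted

/-- `α ∈ POPI_n(Y)` is regular iff `Dom(α) ⊆ Y`. -/
theorem regular_iff_dom_subset {n : ℕ} (Y : Finset (Fin n)) (hY : Y.Nonempty)
    (α : PT n) (hα : α ∈ POPI n Y) :
    IsRegularIn (POPI n Y) α ↔ dom α ⊆ Y := by
  obtain ⟨hinj, hop, him⟩ := hα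
  constructor
  · rintro ⟨β, ⟨hβinj, hβop, hβim⟩, hcomp⟩ x hx
    rw [dom, Finset.mem_filter] at hx
    obtain ⟨y, hy⟩ := Option.isSome_iff_exists.mp hx.2
    have hcx := congrFun hcomp x
    simp only [comp, hy, Option.bind_some] at hcx
    cases hz : β y with
    | none => rw [hz] at hcx; simp [hy] at hcx
    | some z =>
      rw [hz] at hcx
      simp only [Option.bind_some] at hcx
      have hzx : z = x := hinj z x y hcx hy
      exact hzx ▸ hβim y z hz
  · intro hdom
    haveI : Inhabited (Fin n) := ⟨hY.choose⟩
    classical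
    set β : PT n := fun y =>
      if h : ∃ x, α x = some y then some (Classical.choose h) else none with hβ
    have hβα : ∀ x y, α x = some y → β y = some x := by
      intro x y h
      have hex : ∃ x, α x = some y := ⟨x, h⟩
      have := Classical.choose_spec hex
      show (if h : ∃ x, α x = some y then some (Classical.choose h) else none) = some x
      rw [dif_pos hex]
      exact congrArg some (hinj _ _ _ this h)
    have hαβ : ∀ x y, β y = some x → α x = some y := by
      intro x y h
      have h' : (if h : ∃ x, α x = some y then some (Classical.choose h) else none)
          = some x := h
      by_cases hex : ∃ x, α x = some y
      · rw [dif_pos hex] at h'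
        have := Classical.choose_spec hex
        rwa [Option.some_inj.mp h'] at this
      · rw [dif_neg hex] at h'; exact absurd h' (by simp)
    refine ⟨β, ⟨?_, ?_, ?_⟩, ?_⟩
    · intro y₁ y₂ x h1 h2
      have := (hαβ x y₁ h1).symm.trans (hαβ x y₂ h2)
      exact Option.some_inj.mp this
    · exact op_inv α β hinj hβα hαβ hop
    · intro y x h
      have hax := hαβ x y h
      apply hdom
      rw [dom, Finset.mem_filter]
      exact ⟨Finset.mem_univ x, by rw [hax]; rfl⟩
    · funext x
      cases hx : α x with
      | none => simp [comp, hx]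
      | some y =>
        simp only [comp, hx, Option.bind_some]
        rw [hβα x y hx]
        simp [hx]

end POPIpaper
end

section
/- If Dom(α) ⊆ Y and Dom(α) is nonempty, where α ∈ POPI_n(Y), then there exists β ∈ POPI_n(Y) with Dom(β) = Im(α), Im(β) ⊆ Y, β orientation-preserving and injective, such that αβα = α. In particular every α ∈ POPI_n(Y) with Dom(α) ⊆ Y is regular. -/
open scoped Classical

namespace POPIpaper

noncomputable def pinv {n : ℕ} (α : PT n) : PT n :=
  fun y => if h : ∃ x, α x = some y then some h.choose else none

lemma pinv_spec {n : ℕ} {α : PT n} {x y : Fin n} (h : pinv α y = some x) : α x = some y := by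
  unfold pinv at h
  split at h
  · next hex => cases h; exact hex.choose_spec
  · simp at h

lemma pinv_eq {n : ℕ} {α : PT n} (hinj : Inj α) {x y : Fin n} (h : α x = some y) :
    pinv α y = some x := by
  have hex : ∃ x, α x = some y := ⟨x, h⟩
  unfold pinv
  rw [dif_pos hex]
  exact congrArg some (hinj _ _ _ hex.choose_spec h)

lemma filterMap_rotate' {γ δ : Type*} (f : γ → Option δ) :
    ∀ (m : ℕ) (l : List γ), (∀ x ∈ l, (f x).isSome) →
      (l.rotate m).filterMap f = (l.filterMap f).rotate m := by
  intro m
  induction m with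
  | zero => simp
  | succ m ih =>
    intro l hl
    cases l with
    | nil => simp
    | cons a tl =>
      obtain ⟨b, hb⟩ := Option.isSome_iff_exists.mp (hl a (List.mem_cons_self))
      have hmem : ∀ x ∈ tl ++ [a], (f x).isSome := by
        intro x hx
        rcases List.mem_append.mp hx with h | h
        · exact hl x (List.mem_cons_of_mem _ h)
        · rw [List.mem_singleton.mp h]; exact hl a (List.mem_cons_self)
      rw [List.rotate_cons_succ, ih _ hmem]
      rw [List.filterMap_append, List.filterMap_cons, hb]
      simp only [List.filterMap_cons, hb, List.filterMap_nil]
      rw [List.rotate_cons_succ]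

lemma length_filterMap_of_isSome {γ δ : Type*} (f : γ → Option δ) :
    ∀ (l : List γ), (∀ x ∈ l, (f x).isSome) → (l.filterMap f).length = l.length := by
  intro l
  induction l with
  | nil => simp
  | cons a tl ih =>
    intro hl
    obtain ⟨b, hb⟩ := Option.isSome_iff_exists.mp (hl a (List.mem_cons_self))
    rw [List.filterMap_cons, hb]
    simp [ih (fun x hx => hl x (List.mem_cons_of_mem _ hx))]

lemma filterMap_inj_cancel {n : ℕ} {α : PT n} (hinj : Inj α) :
    ∀ (l1 l2 : List (Fin n)), (∀ x ∈ l1, (α x).isSome) → (∀ x ∈ l2, (α x).isSome) →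
      l1.filterMap α = l2.filterMap α → l1 = l2 := by
  intro l1
  induction l1 with
  | nil =>
    intro l2 _ h2 h
    cases l2 with
    | nil => rfl
    | cons b tl =>
      obtain ⟨z, hz⟩ := Option.isSome_iff_exists.mp (h2 b (List.mem_cons_self))
      rw [List.filterMap_nil, List.filterMap_cons, hz] at h
      simp at h
  | cons a tl ih =>
    intro l2 h1 h2 h
    cases l2 with
    | nil =>
      obtain ⟨z, hz⟩ := Option.isSome_iff_exists.mp (h1 a (List.mem_cons_self))
      rw [List.filterMap_nil, List.filterMap_cons, hz] at h
      simp at h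
    | cons b tl2 =>
      obtain ⟨z1, hz1⟩ := Option.isSome_iff_exists.mp (h1 a (List.mem_cons_self))
      obtain ⟨z2, hz2⟩ := Option.isSome_iff_exists.mp (h2 b (List.mem_cons_self))
      rw [List.filterMap_cons, hz1, List.filterMap_cons, hz2] at h
      obtain ⟨hz, htl⟩ := List.cons.injEq _ _ _ _ ▸ h
      subst hz
      have hab : a = b := hinj a b z1 hz1 hz2
      subst hab
      rw [ih tl2 (fun x hx => h1 x (List.mem_cons_of_mem _ hx))
        (fun x hx => h2 x (List.mem_cons_of_mem _ hx)) htl]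

lemma filterMap_filter_isSome {γ δ : Type*} (f : γ → Option δ) (l : List γ) :
    (l.filter (fun x => (f x).isSome)).filterMap f = l.filterMap f := by
  induction l with
  | nil => rfl
  | cons a tl ih =>
    cases hb : f a with
    | none => simp [List.filter_cons, List.filterMap_cons, hb, ih]
    | some b => simp [List.filter_cons, List.filterMap_cons, hb, ih]

lemma op_pinv {n : ℕ} {α : PT n} (hinj : Inj α) (hop : OP α) : OP (pinv α) := by
  obtain ⟨k, hk⟩ := hop
  set R := List.finRange n with hR
  set L := R.filterMap α with hL
  set M := R.filterMap (pinv α) with hM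
  have hRlt : R.Pairwise (· < ·) := List.pairwise_lt_finRange n
  have hMdom : ∀ x ∈ M, (α x).isSome := by
    intro x hx
    obtain ⟨y, -, hy⟩ := List.mem_filterMap.mp hx
    rw [pinv_spec hy]; rfl
  -- M.filterMap α is strictly sorted
  have hMα : (M.filterMap α).Pairwise (· < ·) := by
    rw [hM, List.filterMap_filterMap, List.pairwise_filterMap]
    refine hRlt.imp ?_
    intro y1 y2 hlt b hb b' hb'
    simp only [Option.mem_def, Option.bind_eq_some_iff] at hb hb'
    obtain ⟨x1, hx1, hx1'⟩ := hb
    obtain ⟨x2, hx2, hx2'⟩ := hb'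
    have e1 : b = y1 := by
      have := pinv_spec hx1; rw [this] at hx1'; exact (Option.some.inj hx1').symm
    have e2 : b' = y2 := by
      have := pinv_spec hx2; rw [this] at hx2'; exact (Option.some.inj hx2').symm
    rw [e1, e2]; exact hlt
  have hLnd : L.Nodup := by
    rw [hL, List.Nodup, List.pairwise_filterMap]
    refine hRlt.imp ?_
    intro x1 x2 hlt b hb b' hb' hbb
    subst hbb
    exact absurd (hinj x1 x2 b hb hb') (ne_of_lt hlt)
  have key : M.filterMap α = L.rotate k := by
    refine List.Perm.eq_of_pairwise' (hMα.imp le_of_lt) hk ?_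
    refine ((List.perm_ext_iff_of_nodup (hMα.imp ne_of_lt) hLnd).mpr ?_).trans
      (L.rotate_perm k).symm
    intro y
    simp only [List.mem_filterMap, hL]
    constructor
    · rintro ⟨x, hx, hxy⟩
      exact ⟨x, List.mem_finRange x, hxy⟩
    · rintro ⟨x, -, hxy⟩
      exact ⟨x, List.mem_filterMap.mpr ⟨y, List.mem_finRange y, pinv_eq hinj hxy⟩, hxy⟩
  set A := R.filter (fun x => (α x).isSome) with hA
  have hAdom : ∀ x ∈ A, (α x).isSome := by
    intro x hx
    simpa using (List.mem_filter.mp hx).2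
  have hAL : A.filterMap α = L := filterMap_filter_isSome α R
  have hAsorted : A.Pairwise (· ≤ ·) := (hRlt.filter _).imp le_of_lt
  by_cases hL0 : L.length = 0
  · have : M.length = 0 := by
      rw [← length_filterMap_of_isSome α M hMdom, key, List.length_rotate, hL0]
    refine ⟨0, ?_⟩
    rw [← hM, List.eq_nil_of_length_eq_zero this]
    simp
  · have hpos : 0 < L.length := Nat.pos_of_ne_zero hL0
    set j := L.length * (k + 1) - k with hj
    have hkj : k + j = L.length * (k + 1) := by
      have : k ≤ L.length * (k + 1) := by nlinarith
      omega
    have hrot : (M.rotate j).filterMap α = L := by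
      rw [filterMap_rotate' α j M hMdom, key, List.rotate_rotate, hkj, List.rotate_length_mul]
    have hMA : M.rotate j = A := by
      refine filterMap_inj_cancel hinj _ _ ?_ hAdom (hrot.trans hAL.symm)
      intro x hx
      exact hMdom x ((List.mem_rotate).mp hx)
    exact ⟨j, by rw [← hM, hMA]; exact hAsorted⟩


lemma op_idp {n : ℕ} (A : Finset (Fin n)) : OP (idp A) := by
  refine ⟨0, ?_⟩
  rw [List.rotate_zero]
  have hlt : (List.filterMap (idp A) (List.finRange n)).Pairwise (· < ·) := by
    rw [List.pairwise_filterMap]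
    refine (List.pairwise_lt_finRange n).imp ?_
    intro x1 x2 hlt b hb b' hb'
    simp only [Option.mem_def, idp] at hb hb'
    split at hb
    · split at hb'
      · rw [← Option.some.inj hb, ← Option.some.inj hb']; exact hlt
      · simp at hb'
    · simp at hb
  exact hlt.imp le_of_lt


/-- if `Dom(α) ⊆ Y` and `Dom(α) ≠ ∅` there is `β ∈ POPI_n(Y)` with
`Dom(β) = Im(α)` and `αβα = α`; in particular every `α` with `Dom(α) ⊆ Y` is regular. -/
theorem exists_inverse_of_dom_subset {n : ℕ} (Y : Finset (Fin n)) (hY : Y.Nonempty)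
    (α : PT n) (hα : α ∈ POPI n Y) (hdom : dom α ⊆ Y) :
    ((dom α).Nonempty →
      ∃ β ∈ POPI n Y, dom β = im α ∧ comp (comp α β) α = α) ∧
    IsRegularIn (POPI n Y) α := by
  obtain ⟨hinj, hop, himY⟩ := hα
  have hcomp : comp (comp α (pinv α)) α = α := by
    funext x
    cases hx : α x with
    | none => simp [comp, hx]
    | some y =>
      simp [comp, hx, pinv_eq hinj hx]
  have part1 : (dom α).Nonempty →
      ∃ β ∈ POPI n Y, dom β = im α ∧ comp (comp α β) α = α := by
    intro _
    refine ⟨pinv α, ⟨?_, op_pinv hinj hop, ?_⟩, ?_, hcomp⟩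
    · intro y1 y2 x h1 h2
      have e1 := pinv_spec h1
      have e2 := pinv_spec h2
      rw [e1] at e2
      exact Option.some.inj e2
    · intro y x h
      have := pinv_spec h
      exact hdom (by simp [dom, this])
    · ext y
      simp only [dom, im, Finset.mem_filter, Finset.mem_univ, true_and]
      constructor
      · intro h
        obtain ⟨x, hx⟩ := Option.isSome_iff_exists.mp h
        exact ⟨x, pinv_spec hx⟩
      · rintro ⟨x, hx⟩
        rw [pinv_eq hinj hx]; rfl
  refine ⟨part1, ?_⟩
  by_cases hne : (dom α).Nonempty
  · obtain ⟨β, hβ, -, hc⟩ := part1 hne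
    exact ⟨β, hβ, hc⟩
  · obtain ⟨y₀, hy₀⟩ := hY
    have hαnone : ∀ x, α x = none := by
      intro x
      by_contra h
      exact hne ⟨x, by simp [dom, Option.isSome_iff_ne_none, h]⟩
    refine ⟨idp {y₀}, ⟨?_, op_idp _, ?_⟩, ?_⟩
    · intro x y z hx hy
      simp only [idp] at hx hy
      split at hx
      · split at hy
        · exact (Option.some.inj hx).trans (Option.some.inj hy).symm
        · simp at hy
      · simp at hx
    · intro x y h
      simp only [idp] at h
      split at h
      · next hmem =>
          have hxy : x = y := Option.some.inj h
          have hx0 : x = y₀ := by simpa using hmem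
          rw [← hxy, hx0]; exact hy₀
      · simp at h
    · funext x
      simp [comp, hαnone x]


end POPIpaper
end

section
/- Let α, β ∈ POPI_n(Y). Then (α, β) ∈ ℒ (Green's L-relation on POPI_n(Y)) if and only if either both α and β are regular elements of POPI_n(Y) and Im(α) = Im(β), or α = β. -/
open scoped Classical

namespace POPIpaper

def CycSorted {n : ℕ} (l : List (Fin n)) : Prop :=
  ∃ k : ℕ, (l.rotate k).Pairwise (· ≤ ·)

lemma op_iff {n : ℕ} (α : PT n) : OP α ↔ CycSorted ((List.finRange n).filterMap α) := Iff.rfl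

lemma rotate_eq_of_mod_eq {n : ℕ} {l : List (Fin n)} {a b : ℕ}
    (h : a % l.length = b % l.length) : l.rotate a = l.rotate b := by
  rw [← List.rotate_mod l a, h, List.rotate_mod]

lemma cycSorted_rotate {n : ℕ} {l : List (Fin n)} (k : ℕ) (h : CycSorted l) :
    CycSorted (l.rotate k) := by
  obtain ⟨j, hj⟩ := h
  rcases Nat.eq_zero_or_pos l.length with h0 | hpos
  · have : l = [] := List.length_eq_zero_iff.mp h0
    subst this
    exact ⟨j, by simpa [List.rotate_nil] using hj⟩
  refine ⟨l.length - k % l.length + j, ?_⟩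
  rw [List.rotate_rotate]
  have heq : l.rotate (k + (l.length - k % l.length + j)) = l.rotate j := by
    apply rotate_eq_of_mod_eq
    have h1 := Nat.div_add_mod k l.length
    have h2 := Nat.mod_lt k hpos
    have h3 : k + (l.length - k % l.length + j) = l.length * (k / l.length + 1) + j := by
      rw [Nat.mul_add, Nat.mul_one]; omega
    rw [h3, Nat.mul_add_mod]
  rw [heq]; exact hj

lemma cycSorted_of_rotate {n : ℕ} {l : List (Fin n)} {k : ℕ}
    (h : CycSorted (l.rotate k)) : CycSorted l := by
  obtain ⟨j, hj⟩ := h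
  exact ⟨k + j, by rwa [List.rotate_rotate] at hj⟩

lemma sublist_finRange {n : ℕ} {l : List (Fin n)} (h : l.Pairwise (· < ·)) :
    List.Sublist l (List.finRange n) := by
  have hnd : l.Nodup := h.imp ne_of_lt
  obtain ⟨l', hp, hs⟩ := List.subperm_of_subset hnd (fun x _ => List.mem_finRange x)
  have hl' : l'.Pairwise (· < ·) := (List.pairwise_lt_finRange n).sublist hs
  have hanti : IsAntisymm (Fin n) (· < ·) :=
    ⟨fun a b h1 h2 => absurd h2 (not_lt.2 h1.le)⟩
  have heq : l' = l := List.Perm.eq_of_pairwise (fun a b _ _ h1 h2 => absurd h2 (not_lt.2 h1.le)) hl' h hp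
  rwa [heq] at hs

lemma cycSorted_of_sublist {n : ℕ} {s m : List (Fin n)} (hs : List.Sublist s m) (h : CycSorted m) :
    CycSorted s := by
  obtain ⟨k, hk⟩ := h
  have hrot : m.rotate k = m.drop (k % m.length) ++ m.take (k % m.length) :=
    List.rotate_eq_drop_append_take_mod
  have hm : m = m.take (k % m.length) ++ m.drop (k % m.length) :=
    (List.take_append_drop _ m).symm
  rw [hm] at hs
  obtain ⟨s1, s2, rfl, h1, h2⟩ := List.sublist_append_iff.mp hs
  refine ⟨s1.length, ?_⟩
  rw [List.rotate_append_length_eq]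
  have hsub : List.Sublist (s2 ++ s1) (m.drop (k % m.length) ++ m.take (k % m.length)) := h2.append h1
  exact List.Pairwise.sublist hsub (hrot ▸ hk)

lemma filterMap_rotate {n : ℕ} (l : List (Fin n)) (f : PT n) (k : ℕ) :
    ∃ m, (l.rotate k).filterMap f = (l.filterMap f).rotate m := by
  refine ⟨((l.take (k % l.length)).filterMap f).length, ?_⟩
  have h1 : l.filterMap f
      = (l.take (k % l.length)).filterMap f ++ (l.drop (k % l.length)).filterMap f := by
    rw [← List.filterMap_append, List.take_append_drop]
  rw [h1, List.rotate_append_length_eq, List.rotate_eq_drop_append_take_mod,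
    List.filterMap_append]

lemma cycSorted_filterMap {n : ℕ} {l : List (Fin n)} {f : PT n} (hnd : l.Nodup)
    (hl : CycSorted l) (hf : CycSorted ((List.finRange n).filterMap f)) :
    CycSorted (l.filterMap f) := by
  obtain ⟨k, hk⟩ := hl
  have hnd' : (l.rotate k).Nodup := List.nodup_rotate.mpr hnd
  have hlt : (l.rotate k).Pairwise (· < ·) :=
    (hk.and hnd').imp (fun h => lt_of_le_of_ne h.1 h.2)
  have hsub : List.Sublist ((l.rotate k).filterMap f) ((List.finRange n).filterMap f) :=
    (sublist_finRange hlt).filterMap f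
  have hcyc : CycSorted ((l.rotate k).filterMap f) := cycSorted_of_sublist hsub hf
  obtain ⟨m, hm⟩ := filterMap_rotate l f k
  rw [hm] at hcyc
  exact cycSorted_of_rotate hcyc

noncomputable def inv {n : ℕ} (α : PT n) : PT n :=
  fun y => if h : ∃ x, α x = some y then some h.choose else none

lemma inv_some {n : ℕ} {α : PT n} {x y : Fin n} (hx : inv α y = some x) : α x = some y := by
  unfold inv at hx
  split at hx
  · rename_i hex
    obtain rfl : hex.choose = x := Option.some_inj.mp hx
    exact hex.choose_spec
  · exact absurd hx (by simp)

lemma inv_of_eq {n : ℕ} {α : PT n} (h : Inj α) {x y : Fin n} (hx : α x = some y) :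
    inv α y = some x := by
  have hex : ∃ z, α z = some y := ⟨x, hx⟩
  unfold inv
  rw [dif_pos hex]
  exact congrArg some (h _ _ _ hex.choose_spec hx)

lemma inj_inv {n : ℕ} (α : PT n) : Inj (inv α) := by
  intro x y z hx hy
  have h1 := inv_some hx
  have h2 := inv_some hy
  rw [h1] at h2
  exact Option.some_inj.mp h2

lemma nodup_filterMap_finRange {n : ℕ} {α : PT n} (h : Inj α) :
    ((List.finRange n).filterMap α).Nodup :=
  List.Nodup.filterMap (fun a a' b hb hb' => h a a' b hb hb') (List.nodup_finRange n)

lemma op_inv_s4 {n : ℕ} {α : PT n} (hi : Inj α) (hop : OP α) : OP (inv α) := by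
  classical
  set P : List (Fin n × Fin n) :=
    (List.finRange n).filterMap (fun x => (α x).map fun y => (x, y)) with hP
  set Q : List (Fin n × Fin n) :=
    (List.finRange n).filterMap (fun y => ((inv α) y).map fun x => (y, x)) with hQ
  have mem_P : ∀ p : Fin n × Fin n, p ∈ P ↔ α p.1 = some p.2 := by
    rintro ⟨a, b⟩
    simp only [hP, List.mem_filterMap, Option.map_eq_some_iff, Prod.mk.injEq]
    constructor
    · rintro ⟨x, -, y, hy, rfl, rfl⟩; exact hy
    · intro h; exact ⟨a, List.mem_finRange a, b, h, rfl, rfl⟩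
  have mem_Q : ∀ p : Fin n × Fin n, p ∈ Q ↔ inv α p.1 = some p.2 := by
    rintro ⟨a, b⟩
    simp only [hQ, List.mem_filterMap, Option.map_eq_some_iff, Prod.mk.injEq]
    constructor
    · rintro ⟨x, -, y, hy, rfl, rfl⟩; exact hy
    · intro h; exact ⟨a, List.mem_finRange a, b, h, rfl, rfl⟩
  have snd_P : P.map Prod.snd = (List.finRange n).filterMap α := by
    rw [hP, List.map_filterMap]
    congr 1
    funext x
    cases hx : α x <;> simp [hx]
  have fst_P : P.map Prod.fst = (List.finRange n).filterMap (fun x => (α x).map fun _ => x) := by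
    rw [hP, List.map_filterMap]
    congr 1
    funext x
    cases hx : α x <;> simp [hx]
  have snd_Q : Q.map Prod.snd = (List.finRange n).filterMap (inv α) := by
    rw [hQ, List.map_filterMap]
    congr 1
    funext x
    cases hx : inv α x <;> simp [hx]
  have fst_P_lt : (P.map Prod.fst).Pairwise (· < ·) := by
    rw [fst_P]
    refine List.pairwise_filterMap.mpr ?_
    refine (List.pairwise_lt_finRange n).imp_of_mem ?_
    intro a a' ha ha' hlt b hb b' hb'
    cases hx : α a <;> rw [hx] at hb <;> simp at hb
    cases hx' : α a' <;> rw [hx'] at hb' <;> simp at hb'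
    subst hb; subst hb'; exact hlt
  obtain ⟨k, hk⟩ := hop
  set P' := P.rotate k with hP'
  have snd_P'_sorted : (P'.map Prod.snd).Pairwise (· ≤ ·) := by
    rw [hP', List.map_rotate, snd_P]; exact hk
  have snd_P'_nodup : (P'.map Prod.snd).Nodup := by
    rw [hP', List.map_rotate]
    exact List.nodup_rotate.mpr (by rw [snd_P]; exact nodup_filterMap_finRange hi)
  have snd_P'_lt : (P'.map Prod.snd).Pairwise (· < ·) :=
    (snd_P'_sorted.and snd_P'_nodup).imp (fun h => lt_of_le_of_ne h.1 h.2)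
  -- Q is sorted by first coordinates
  have fst_Q_lt : (Q.map Prod.fst).Pairwise (· < ·) := by
    rw [hQ, List.map_filterMap]
    refine List.pairwise_filterMap.mpr ?_
    refine (List.pairwise_lt_finRange n).imp_of_mem ?_
    intro a a' ha ha' hlt b hb b' hb'
    cases hx : inv α a <;> rw [hx] at hb <;> simp at hb
    cases hx' : inv α a' <;> rw [hx'] at hb' <;> simp at hb'
    subst hb; subst hb'; exact hlt
  have P_nodup : P.Nodup :=
    List.Nodup.of_map Prod.fst (fst_P_lt.imp ne_of_lt)
  have Q_nodup : Q.Nodup :=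
    List.Nodup.of_map Prod.fst (fst_Q_lt.imp ne_of_lt)
  have P'_nodup : (P'.map Prod.swap).Nodup :=
    (List.nodup_rotate.mpr P_nodup).map (fun a b h => by
      simpa [Prod.ext_iff, and_comm] using congrArg Prod.swap h)
  have hperm : List.Perm Q (P'.map Prod.swap) := by
    refine (List.perm_ext_iff_of_nodup Q_nodup P'_nodup).mpr ?_
    rintro ⟨y, x⟩
    rw [mem_Q]
    constructor
    · intro h
      refine List.mem_map.mpr ⟨(x, y), ?_, rfl⟩
      rw [hP', List.mem_rotate, mem_P]
      exact inv_some h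
    · intro h
      obtain ⟨⟨x', y'⟩, hmem, heq⟩ := List.mem_map.mp h
      obtain ⟨rfl, rfl⟩ : y' = y ∧ x' = x := by
        simpa [Prod.ext_iff] using heq
      rw [hP', List.mem_rotate, mem_P] at hmem
      exact inv_of_eq hi hmem
  have hanti : IsAntisymm (Fin n × Fin n) (fun p q => p.1 < q.1) :=
    ⟨fun a b h1 h2 => absurd h2 (not_lt.2 h1.le)⟩
  have hsortQ : Q.Pairwise (fun p q => p.1 < q.1) := List.pairwise_map.mp fst_Q_lt
  have hsortP' : (P'.map Prod.swap).Pairwise (fun p q => p.1 < q.1) := by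
    refine List.pairwise_map.mpr ?_
    have := List.pairwise_map.mp snd_P'_lt
    exact this.imp (fun h => h)
  have hQeq : Q = P'.map Prod.swap :=
    List.Perm.eq_of_pairwise (fun a b _ _ h1 h2 => absurd h2 (not_lt.2 h1.le)) hsortQ hsortP' hperm
  -- conclude
  have key : (List.finRange n).filterMap (inv α) = (P.map Prod.fst).rotate k := by
    rw [← snd_Q, hQeq, List.map_map, hP', ← List.map_rotate]
    rfl
  have : CycSorted ((List.finRange n).filterMap (inv α)) := by
    rw [key]
    exact cycSorted_rotate k ⟨0, by simpa using fst_P_lt.imp le_of_lt⟩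
  exact this


lemma mem_im {n : ℕ} {α : PT n} {y : Fin n} : y ∈ im α ↔ ∃ x, α x = some y := by
  simp [im]

lemma comp_mem {n : ℕ} {Y : Finset (Fin n)} {α β : PT n}
    (hα : α ∈ POPI n Y) (hβ : β ∈ POPI n Y) : comp α β ∈ POPI n Y := by
  obtain ⟨hαi, hαo, hαY⟩ := hα
  obtain ⟨hβi, hβo, hβY⟩ := hβ
  refine ⟨?_, ?_, ?_⟩
  · intro x y z hx hy
    simp only [comp, Option.bind_eq_some_iff] at hx hy
    obtain ⟨u, hu, hu2⟩ := hx
    obtain ⟨v, hv, hv2⟩ := hy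
    have huv : u = v := hβi _ _ _ hu2 hv2
    subst huv
    exact hαi _ _ _ hu hv
  · rw [op_iff]
    have heq : (List.finRange n).filterMap (comp α β)
        = ((List.finRange n).filterMap α).filterMap β := by
      rw [List.filterMap_filterMap]
      rfl
    rw [heq]
    exact cycSorted_filterMap (nodup_filterMap_finRange hαi) hαo hβo
  · intro x y h
    simp only [comp, Option.bind_eq_some_iff] at h
    obtain ⟨u, hu, hu2⟩ := h
    exact hβY _ _ hu2

lemma inv_mem {n : ℕ} {Y : Finset (Fin n)} {α : PT n} (hα : α ∈ POPI n Y)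
    (hdom : ∀ x y : Fin n, α x = some y → x ∈ Y) : inv α ∈ POPI n Y :=
  ⟨inj_inv α, op_inv_s4 hα.1 hα.2.1, fun x y h => hdom y x (inv_some h)⟩

lemma dom_subset_of_regular {n : ℕ} {Y : Finset (Fin n)} {β : PT n}
    (hβi : Inj β) (h : IsRegularIn (POPI n Y) β) :
    ∀ x y : Fin n, β x = some y → x ∈ Y := by
  obtain ⟨b, hb, hbc⟩ := h
  intro x y hxy
  have hx := congrFun hbc x
  simp only [comp, hxy, Option.bind_some] at hx
  obtain ⟨u, hu, hu2⟩ := Option.bind_eq_some_iff.mp hx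
  have hux : u = x := hβi _ _ _ hu2 hxy
  subst hux
  exact hb.2.2 _ _ hu

lemma regular_of_dom {n : ℕ} {Y : Finset (Fin n)} {α : PT n} (hα : α ∈ POPI n Y)
    (hdom : ∀ x y : Fin n, α x = some y → x ∈ Y) : IsRegularIn (POPI n Y) α := by
  refine ⟨inv α, inv_mem hα hdom, ?_⟩
  funext x
  cases hx : α x with
  | none => simp [comp, hx]
  | some y => simp [comp, hx, inv_of_eq hα.1 hx]

/-- Green's ℒ on `POPI_n(Y)`. -/
theorem green_L {n : ℕ} (Y : Finset (Fin n)) (hY : Y.Nonempty)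
    (α β : PT n) (hα : α ∈ POPI n Y) (hβ : β ∈ POPI n Y) :
    LRel (POPI n Y) α β ↔
      (IsRegularIn (POPI n Y) α ∧ IsRegularIn (POPI n Y) β ∧ im α = im β) ∨ α = β := by
  constructor
  · intro hL
    by_cases heq : α = β
    · exact Or.inr heq
    obtain ⟨h1, h2⟩ := hL
    obtain ⟨γ, hγ, hγc⟩ := h1.resolve_left heq
    obtain ⟨δ, hδ, hδc⟩ := h2.resolve_left (fun h => heq h.symm)
    left
    have hαi : Inj α := hα.1
    have hβi : Inj β := hβ.1
    have hdomα : ∀ x y : Fin n, α x = some y → x ∈ Y := by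
      intro x y hxy
      have h1x := congrFun hγc x
      simp only [comp] at h1x
      rw [hxy] at h1x
      obtain ⟨u, hu, hu2⟩ := Option.bind_eq_some_iff.mp h1x
      have h2u := congrFun hδc u
      simp only [comp] at h2u
      rw [hu2] at h2u
      obtain ⟨v, hv, hv2⟩ := Option.bind_eq_some_iff.mp h2u
      have hvx : v = x := hαi _ _ _ hv2 hxy
      subst hvx
      exact hδ.2.2 _ _ hv
    have hdomβ : ∀ x y : Fin n, β x = some y → x ∈ Y := by
      intro x y hxy
      have h2x := congrFun hδc x
      simp only [comp] at h2x
      rw [hxy] at h2x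
      obtain ⟨u, hu, hu2⟩ := Option.bind_eq_some_iff.mp h2x
      have h1u := congrFun hγc u
      simp only [comp] at h1u
      rw [hu2] at h1u
      obtain ⟨v, hv, hv2⟩ := Option.bind_eq_some_iff.mp h1u
      have hvx : v = x := hβi _ _ _ hv2 hxy
      subst hvx
      exact hγ.2.2 _ _ hv
    have him : im α = im β := by
      ext z
      simp only [mem_im]
      constructor
      · rintro ⟨x, hx⟩
        have h1x := congrFun hγc x
        simp only [comp] at h1x
        rw [hx] at h1x
        obtain ⟨u, hu, hu2⟩ := Option.bind_eq_some_iff.mp h1x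
        exact ⟨u, hu2⟩
      · rintro ⟨x, hx⟩
        have h2x := congrFun hδc x
        simp only [comp] at h2x
        rw [hx] at h2x
        obtain ⟨u, hu, hu2⟩ := Option.bind_eq_some_iff.mp h2x
        exact ⟨u, hu2⟩
    exact ⟨regular_of_dom hα hdomα, regular_of_dom hβ hdomβ, him⟩
  · rintro (⟨hrα, hrβ, him⟩ | rfl)
    · have hdomα := dom_subset_of_regular hα.1 hrα
      have hdomβ := dom_subset_of_regular hβ.1 hrβ
      constructor
      · right
        refine ⟨comp α (inv β), comp_mem hα (inv_mem hβ hdomβ), ?_⟩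
        funext x
        cases hx : α x with
        | none => simp [comp, hx]
        | some z =>
          have hz : z ∈ im β := him ▸ mem_im.mpr ⟨x, hx⟩
          obtain ⟨w, hw⟩ := mem_im.mp hz
          simp [comp, hx, inv_of_eq hβ.1 hw, hw]
      · right
        refine ⟨comp β (inv α), comp_mem hβ (inv_mem hα hdomα), ?_⟩
        funext x
        cases hx : β x with
        | none => simp [comp, hx]
        | some z =>
          have hz : z ∈ im α := him.symm ▸ mem_im.mpr ⟨x, hx⟩
          obtain ⟨w, hw⟩ := mem_im.mp hz
          simp [comp, hx, inv_of_eq hα.1 hw, hw]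
    · exact ⟨Or.inl rfl, Or.inl rfl⟩


end POPIpaper
end

section
/- Let α, β ∈ POPI_n(Y). Then (α, β) ∈ ℛ (Green's R-relation on POPI_n(Y)) if and only if Dom(α) = Dom(β). -/
open scoped Classical

namespace POPIpaper

-- auxiliary lemmas
lemma filterMap_eq_filter_filterMap {α β : Type*} (f : α → Option β) (l : List α) :
    l.filterMap f = (l.filter (fun x => (f x).isSome)).filterMap f := by
  induction l with
  | nil => simp
  | cons a l ih =>
    cases h : f a <;> simp [List.filterMap_cons, List.filter_cons, h, ih]

lemma op_of_rotate {n : ℕ} {l : List (Fin n)} (k : ℕ)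
    (h : ∃ m, (l.rotate m).Pairwise (· ≤ ·)) :
    ∃ m, ((l.rotate k).rotate m).Pairwise (· ≤ ·) := by
  obtain ⟨m, hm⟩ := h
  rcases Nat.eq_zero_or_pos l.length with h0 | hpos
  · exact ⟨0, by simp [List.eq_nil_of_length_eq_zero h0]⟩
  · refine ⟨m + l.length * k - k, ?_⟩
    have hk : k ≤ l.length * k := Nat.le_mul_of_pos_left k hpos
    have : k + (m + l.length * k - k) = m + l.length * k := by omega
    rw [List.rotate_rotate, this, ← List.rotate_mod, Nat.add_mul_mod_self_left,
      List.rotate_mod]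
    exact hm

lemma exists_right_factor {n : ℕ} (Y : Finset (Fin n)) {α β : PT n}
    (hα : α ∈ POPI n Y) (hβ : β ∈ POPI n Y) (hd : dom α = dom β) :
    ∃ γ ∈ POPI n Y, comp β γ = α := by
  obtain ⟨hβi, hβop, hβY⟩ := hβ
  obtain ⟨hαi, hαop, hαY⟩ := hα
  classical
  set γ : PT n := fun y => if h : ∃ x, β x = some y then α h.choose else none with hγ
  have hdom' : ∀ x : Fin n, (α x).isSome ↔ (β x).isSome := by
    intro x
    have := Finset.ext_iff.mp hd x
    simpa [dom] using this
  -- γ (β x) = α x pointwise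
  have hkey : ∀ x y : Fin n, β x = some y → γ y = α x := by
    intro x y hxy
    have hex : ∃ x', β x' = some y := ⟨x, hxy⟩
    have := hex.choose_spec
    have hx : hex.choose = x := hβi _ _ _ this hxy
    simp [hγ, dif_pos hex, hx]
  have hcomp : comp β γ = α := by
    funext x
    cases hb : β x with
    | none =>
      have : ¬ (α x).isSome := by rw [hdom' x, hb]; simp
      simp [comp, hb, Option.not_isSome_iff_eq_none.mp this]
    | some y => simp [comp, hb, hkey x y hb]
  -- γ y isSome iff y in image of β
  have hsome : ∀ y : Fin n, (γ y).isSome ↔ ∃ x, β x = some y := by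
    intro y
    constructor
    · intro h
      by_contra hc
      simp [hγ, dif_neg hc] at h
    · intro hex
      have := hex.choose_spec
      have : (β hex.choose).isSome := by simp [this]
      rw [← hdom'] at this
      simpa [hγ, dif_pos hex] using this
  -- γ characterization: γ y = some z ↔ ∃ x, β x = some y ∧ α x = some z
  have hchar : ∀ y z : Fin n, γ y = some z → ∃ x, β x = some y ∧ α x = some z := by
    intro y z h
    by_cases hex : ∃ x, β x = some y
    · exact ⟨hex.choose, hex.choose_spec, by simpa [hγ, dif_pos hex] using h⟩
    · simp [hγ, dif_neg hex] at h
  refine ⟨γ, ⟨?_, ?_, ?_⟩, hcomp⟩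
  · -- Inj
    intro y₁ y₂ z h₁ h₂
    obtain ⟨x₁, hb₁, ha₁⟩ := hchar _ _ h₁
    obtain ⟨x₂, hb₂, ha₂⟩ := hchar _ _ h₂
    have : x₁ = x₂ := hαi _ _ _ ha₁ ha₂
    rw [this] at hb₁
    exact Option.some_injective _ (hb₁.symm.trans hb₂)
  · -- OP
    set L := List.finRange n with hL
    set B := L.filterMap β with hB
    obtain ⟨k, hk⟩ := hβop
    have hBnodup : B.Nodup := by
      apply List.Nodup.filterMap
      · intro a a' b hb hb'
        exact hβi _ _ _ (by simpa using hb) (by simpa using hb')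
      · exact List.nodup_finRange n
    have hFsorted : (L.filter (fun y => (γ y).isSome)).Pairwise (· ≤ ·) := by
      apply List.Pairwise.filter
      exact (List.pairwise_lt_finRange n).imp le_of_lt
    have hFnodup : (L.filter (fun y => (γ y).isSome)).Nodup :=
      (List.nodup_finRange n).filter _
    have hrotnodup : (B.rotate k).Nodup := by
      rwa [List.nodup_rotate]
    -- F = B.rotate k
    have hFB : L.filter (fun y => (γ y).isSome) = B.rotate k := by
      apply List.Perm.eq_of_pairwise' hFsorted hk
      rw [List.perm_ext_iff_of_nodup hFnodup hrotnodup]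
      intro y
      simp only [List.mem_filter, List.mem_rotate, hB, List.mem_filterMap, hsome y]
      constructor
      · rintro ⟨-, x, hx⟩; exact ⟨x, by simp [hL], hx⟩
      · rintro ⟨x, -, hx⟩; exact ⟨by simp [hL], x, hx⟩
    -- L.filterMap γ = (B.rotate k).filterMap γ
    have h1 : L.filterMap γ = (B.rotate k).filterMap γ := by
      conv_rhs => rw [← hFB, ← filterMap_eq_filter_filterMap]
    -- (B.rotate k).filterMap γ is a rotation of B.filterMap γ
    have h2 : B.filterMap γ = L.filterMap α := by
      rw [hB, List.filterMap_filterMap, ← hcomp]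
      rfl
    set k' := k % B.length with hk'
    have hrot : B.rotate k = B.drop k' ++ B.take k' :=
      List.rotate_eq_drop_append_take_mod
    have h3 : (B.rotate k).filterMap γ =
        ((B.take k').filterMap γ ++ (B.drop k').filterMap γ).rotate
          ((B.take k').filterMap γ).length := by
      rw [List.rotate_append_length_eq, hrot, List.filterMap_append]
    have h4 : (B.take k').filterMap γ ++ (B.drop k').filterMap γ = L.filterMap α := by
      rw [← List.filterMap_append, List.take_append_drop, h2]
    have h5 : L.filterMap γ =
        (L.filterMap α).rotate ((B.take k').filterMap γ).length := by
      rw [h1, h3, h4]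
    have h6 := op_of_rotate (l := L.filterMap α) ((B.take k').filterMap γ).length hαop
    rw [← h5] at h6
    exact h6
  · -- image in Y
    intro y z h
    obtain ⟨x, -, ha⟩ := hchar _ _ h
    exact hαY _ _ ha


/-- Green's ℛ on `POPI_n(Y)`. -/
theorem green_R {n : ℕ} (Y : Finset (Fin n)) (hY : Y.Nonempty)
    (α β : PT n) (hα : α ∈ POPI n Y) (hβ : β ∈ POPI n Y) :
    RRel (POPI n Y) α β ↔ dom α = dom β := by
  unfold RRel

  constructor
  · rintro ⟨h₁, h₂⟩
    have sub : ∀ (a b : PT n), (a = b ∨ ∃ γ ∈ POPI n Y, comp b γ = a) → dom a ⊆ dom b := by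
      rintro a b (rfl | ⟨γ, -, rfl⟩)
      · exact Finset.Subset.refl _
      · intro x hx
        simp only [dom, Finset.mem_filter, Finset.mem_univ, true_and, comp] at hx ⊢
        cases h : b x with
        | none => have hx' := (Finset.mem_filter.mp hx).2; simp [h] at hx'
        | some y => simp [h]
    exact le_antisymm (sub _ _ h₁) (sub _ _ h₂)
  · intro hd
    refine ⟨?_, ?_⟩
    · obtain ⟨γ, hγ, hc⟩ := exists_right_factor Y hα hβ hd
      exact Or.inr ⟨γ, hγ, hc⟩
    · obtain ⟨γ, hγ, hc⟩ := exists_right_factor Y hβ hα hd.symm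
      exact Or.inr ⟨γ, hγ, hc⟩


end POPIpaper
end

section
/- For nonempty subsets A ⊆ Ω_n and B ⊆ Y with |A| = |B| = k ≥ 1, the number of injective orientation-preserving partial transformations α of Ω_n with Dom(α) = A and Im(α) = B equals k. -/
open scoped Classical

namespace POPIpaper

section Aux

variable {n k : ℕ} {A B : Finset (Fin n)}

/-- The canonical orientation-preserving map with domain `A`, image `B`, rotation `r`. -/
noncomputable def mka (hA : A.card = k) (hB : B.card = k) (r : Fin k) : PT n :=
  fun x => if h : x ∈ A then
    some ((B.orderIsoOfFin hB ((A.orderIsoOfFin hA).symm ⟨x, h⟩ + r) : Fin n)) else none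

lemma sort_eq_filter (A : Finset (Fin n)) :
    Finset.sort A (· ≤ ·) = (List.finRange n).filter (fun x => x ∈ A) := by
  have hperm : (Finset.sort A (· ≤ ·)).Perm ((List.finRange n).filter (fun x => x ∈ A)) := by
    apply List.perm_of_nodup_nodup_toFinset_eq (Finset.sort_nodup _ _)
      ((List.nodup_finRange n).filter _)
    ext x
    simp [Finset.mem_sort, List.mem_filter]
  exact List.Perm.eq_of_pairwise' (r := (· ≤ ·)) (Finset.pairwise_sort _ _)
    ((List.Pairwise.sublist List.filter_sublist
      (List.pairwise_lt_finRange n)).imp le_of_lt) hperm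

lemma filterMap_ite_map (l : List (Fin n)) (p : Fin n → Prop) [DecidablePred p]
    (f : Fin n → Fin n) :
    l.filterMap (fun x => if p x then some (f x) else none)
      = (l.filter (fun x => p x)).map f := by
  induction l with
  | nil => simp
  | cons a l ih =>
    by_cases h : p a <;> simp [List.filterMap_cons, List.filter_cons, h, ih]

lemma filterMap_mka (hA : A.card = k) (hB : B.card = k) (r : Fin k) :
    (List.finRange n).filterMap (mka hA hB r) = (Finset.sort B (· ≤ ·)).rotate ↑r := by
  classical
  set ftot : Fin n → Fin n := fun x =>
    if h : x ∈ A then (B.orderIsoOfFin hB ((A.orderIsoOfFin hA).symm ⟨x, h⟩ + r) : Fin n)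
    else x with hftot
  have h1 : (List.finRange n).filterMap (mka hA hB r)
      = ((List.finRange n).filter (fun x => x ∈ A)).map ftot := by
    rw [← filterMap_ite_map]
    apply List.filterMap_congr
    intro x _
    by_cases h : x ∈ A <;> simp [mka, ftot, h]
  rw [h1, ← sort_eq_filter]
  have hlenA : (Finset.sort A (· ≤ ·)).length = k := by rw [Finset.length_sort, hA]
  have hlenB : (Finset.sort B (· ≤ ·)).length = k := by rw [Finset.length_sort, hB]
  apply List.ext_getElem
  · simp [hlenA, hlenB]
  intro i h1' h2'
  have hik : i < k := by simpa [hlenA] using h1'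
  rw [List.getElem_map, List.getElem_rotate]
  have hgetA : (Finset.sort A (· ≤ ·))[i]'(by simpa [hlenA] using hik)
      = A.orderEmbOfFin hA ⟨i, hik⟩ := (Finset.orderEmbOfFin_apply A hA ⟨i, hik⟩).symm
  rw [hgetA]
  have hmem : A.orderEmbOfFin hA ⟨i, hik⟩ ∈ A := Finset.orderEmbOfFin_mem A hA _
  have hsymm : (A.orderIsoOfFin hA).symm ⟨A.orderEmbOfFin hA ⟨i, hik⟩, hmem⟩ = ⟨i, hik⟩ := by
    apply (A.orderIsoOfFin hA).injective
    rw [OrderIso.apply_symm_apply]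
    apply Subtype.ext
    rw [Finset.coe_orderIsoOfFin_apply]
  have hval : ftot (A.orderEmbOfFin hA ⟨i, hik⟩)
      = B.orderEmbOfFin hB (⟨i, hik⟩ + r) := by
    rw [hftot]
    dsimp only
    rw [dif_pos hmem, hsymm, Finset.coe_orderIsoOfFin_apply]
  rw [hval, Finset.orderEmbOfFin_apply]
  have hidx : ((⟨i, hik⟩ + r : Fin k) : ℕ) = (i + ↑r) % (Finset.sort B (· ≤ ·)).length := by
    rw [Fin.val_add, hlenB]
  simp [hidx]

lemma dom_mka (hA : A.card = k) (hB : B.card = k) (r : Fin k) :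
    dom (mka hA hB r) = A := by
  ext x
  by_cases h : x ∈ A <;> simp [dom, mka, h]

lemma inj_mka (hA : A.card = k) (hB : B.card = k) (hk : 1 ≤ k) (r : Fin k) :
    Inj (mka hA hB r) := by
  haveI : NeZero k := ⟨Nat.one_le_iff_ne_zero.mp hk⟩
  intro x y z hx hy
  by_cases h1 : x ∈ A
  · by_cases h2 : y ∈ A
    · rw [mka, dif_pos h1] at hx
      rw [mka, dif_pos h2] at hy
      have hz : ((B.orderIsoOfFin hB ((A.orderIsoOfFin hA).symm ⟨x, h1⟩ + r) : Fin n))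
          = ((B.orderIsoOfFin hB ((A.orderIsoOfFin hA).symm ⟨y, h2⟩ + r) : Fin n)) := by
        rw [Option.some_inj] at hx hy
        rw [hx, hy]
      have hz2 : (A.orderIsoOfFin hA).symm ⟨x, h1⟩ + r
          = (A.orderIsoOfFin hA).symm ⟨y, h2⟩ + r :=
        (B.orderIsoOfFin hB).injective (Subtype.coe_injective hz)
      have hz3 : (A.orderIsoOfFin hA).symm ⟨x, h1⟩ = (A.orderIsoOfFin hA).symm ⟨y, h2⟩ :=
        add_right_cancel hz2
      have := (A.orderIsoOfFin hA).symm.injective hz3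
      exact congrArg Subtype.val this
    · rw [mka, dif_neg h2] at hy; exact absurd hy (by simp)
  · rw [mka, dif_neg h1] at hx; exact absurd hx (by simp)

lemma op_mka (hA : A.card = k) (hB : B.card = k) (r : Fin k) :
    OP (mka hA hB r) := by
  refine ⟨k - ↑r, ?_⟩
  rw [filterMap_mka, List.rotate_rotate]
  have hlenB : (Finset.sort B (· ≤ ·)).length = k := by rw [Finset.length_sort, hB]
  have : (↑r + (k - ↑r)) = k := by omega
  rw [this, ← hlenB, List.rotate_length]
  exact Finset.pairwise_sort _ _

lemma im_mka (hA : A.card = k) (hB : B.card = k) (r : Fin k) :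
    im (mka hA hB r) = B := by
  ext y
  have : (∃ x, mka hA hB r x = some y) ↔ y ∈ (List.finRange n).filterMap (mka hA hB r) := by
    rw [List.mem_filterMap]
    constructor
    · rintro ⟨x, hx⟩; exact ⟨x, List.mem_finRange x, hx⟩
    · rintro ⟨x, _, hx⟩; exact ⟨x, hx⟩
  simp only [im, Finset.mem_filter, Finset.mem_univ, true_and]
  rw [this, filterMap_mka, List.mem_rotate, Finset.mem_sort]

lemma det_aux (l : List (Fin n)) : ∀ (α β : PT n),
    (∀ x, (α x).isSome = (β x).isSome) → l.filterMap α = l.filterMap β →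
    ∀ x ∈ l, α x = β x := by
  induction l with
  | nil => simp
  | cons a l ih =>
    intro α β h1 h2 x hx
    cases hα : α a with
    | none =>
      have hβ : β a = none := by
        have := h1 a
        rw [hα] at this
        cases hb : β a with
        | none => rfl
        | some w => rw [hb] at this; simp at this
      rw [List.filterMap_cons_none hα, List.filterMap_cons_none hβ] at h2
      rcases List.mem_cons.mp hx with h | h
      · rw [h, hα, hβ]
      · exact ih α β h1 h2 x h
    | some v =>
      have hs : (β a).isSome := by rw [← h1]; simp [hα]
      obtain ⟨w, hβ⟩ := Option.isSome_iff_exists.mp hs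
      rw [List.filterMap_cons_some hα, List.filterMap_cons_some hβ] at h2
      have hvw : v = w := (List.cons.injEq _ _ _ _ ▸ h2).1
      have htail := (List.cons.injEq _ _ _ _ ▸ h2).2
      rcases List.mem_cons.mp hx with h | h
      · rw [h, hα, hβ, hvw]
      · exact ih α β h1 htail x h

end Aux

/-- the number of injective orientation-preserving partial maps with
given domain `A` and image `B ⊆ Y`, `|A| = |B| = k ≥ 1`, is exactly `k`. -/
theorem card_fixed_dom_im {n k : ℕ} (Y A B : Finset (Fin n)) (hA : A.Nonempty)
    (hBY : B ⊆ Y) (hAk : A.card = k) (hBk : B.card = k) (hk : 1 ≤ k) :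
    Set.ncard {α : PT n | Inj α ∧ OP α ∧ dom α = A ∧ im α = B} = k := by
  classical
  have hk0 : 0 < k := hk
  have hlenB : (Finset.sort B (· ≤ ·)).length = k := by rw [Finset.length_sort, hBk]
  have hBne : Finset.sort B (· ≤ ·) ≠ [] := by
    intro h
    rw [h] at hlenB
    simp at hlenB
    omega
  have key : {α : PT n | Inj α ∧ OP α ∧ dom α = A ∧ im α = B}
      = ↑(Finset.image (mka hAk hBk) Finset.univ) := by
    ext α
    simp only [Set.mem_setOf_eq, Finset.coe_image, Finset.coe_univ, Set.image_univ,
      Set.mem_range]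
    constructor
    · rintro ⟨hInj, hOP, hdom, him⟩
      have hdom' : ∀ x, (α x).isSome ↔ x ∈ A := by
        intro x
        rw [← hdom]
        simp [dom]
      have him' : ∀ y, (∃ x, α x = some y) ↔ y ∈ B := by
        intro y
        rw [← him]
        simp [im]
      set F := (List.finRange n).filterMap α with hF
      have hFnd : F.Nodup := by
        apply List.Nodup.filterMap _ (List.nodup_finRange n)
        intro a a' b hb hb'
        exact hInj a a' b (Option.mem_def.mp hb) (Option.mem_def.mp hb')
      have hFmem : ∀ y, y ∈ F ↔ y ∈ B := by
        intro y
        rw [hF, List.mem_filterMap]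
        constructor
        · rintro ⟨x, _, hx⟩; exact (him' y).mp ⟨x, hx⟩
        · intro hy
          obtain ⟨x, hx⟩ := (him' y).mpr hy
          exact ⟨x, List.mem_finRange x, hx⟩
      have hperm : F.Perm (Finset.sort B (· ≤ ·)) := by
        apply List.perm_of_nodup_nodup_toFinset_eq hFnd (Finset.sort_nodup _ _)
        ext y
        simp [List.mem_toFinset, hFmem, Finset.mem_sort]
      obtain ⟨j, hsort⟩ := hOP
      have heq : F.rotate j = Finset.sort B (· ≤ ·) :=
        List.Perm.eq_of_pairwise' hsort
          (Finset.pairwise_sort _ _) ((F.rotate_perm j).trans hperm)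
      have hFr : F = (Finset.sort B (· ≤ ·)).rotate
          ((Finset.sort B (· ≤ ·)).length - j % (Finset.sort B (· ≤ ·)).length) :=
        List.rotate_eq_iff.mp heq
      set m := (Finset.sort B (· ≤ ·)).length - j % (Finset.sort B (· ≤ ·)).length with hm
      refine ⟨⟨m % k, Nat.mod_lt _ hk0⟩, ?_⟩
      have hrot : (Finset.sort B (· ≤ ·)).rotate (m % k) = (Finset.sort B (· ≤ ·)).rotate m := by
        conv_lhs => rw [← hlenB]
        exact List.rotate_mod _ m
      have hFF : (List.finRange n).filterMap (mka hAk hBk ⟨m % k, Nat.mod_lt _ hk0⟩)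
          = (List.finRange n).filterMap α := by
        rw [filterMap_mka, ← hF, hFr]
        exact hrot
      have hsome : ∀ x, ((mka hAk hBk ⟨m % k, Nat.mod_lt _ hk0⟩) x).isSome = (α x).isSome := by
        intro x
        by_cases h : x ∈ A
        · rw [mka, dif_pos h]
          have := (hdom' x).mpr h
          simp [this]
        · rw [mka, dif_neg h]
          have : ¬ (α x).isSome := fun hs => h ((hdom' x).mp hs)
          simp [Option.not_isSome_iff_eq_none.mp this]
      funext x
      exact det_aux (List.finRange n) _ α hsome hFF x (List.mem_finRange x)
    · rintro ⟨r, rfl⟩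
      exact ⟨inj_mka hAk hBk hk r, op_mka hAk hBk r, dom_mka hAk hBk r, im_mka hAk hBk r⟩
  rw [key, Set.ncard_coe_finset]
  have hinj : Function.Injective (mka hAk hBk : Fin k → PT n) := by
    intro r s h
    have h2 : (Finset.sort B (· ≤ ·)).rotate ↑r = (Finset.sort B (· ≤ ·)).rotate ↑s := by
      rw [← filterMap_mka hAk hBk r, ← filterMap_mka hAk hBk s, h]
    have h3 := List.Nodup.rotate_congr (Finset.sort_nodup _ _) hBne _ _ h2
    rw [hlenB, Nat.mod_eq_of_lt r.isLt, Nat.mod_eq_of_lt s.isLt] at h3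
    exact Fin.ext h3
  rw [Finset.card_image_of_injective _ hinj, Finset.card_univ, Fintype.card_fin]

end POPIpaper
end

section
/- Let Y ⊆ Ω_n with |Y| = r ≥ 1. The cardinality of the semigroup POPI_n(Y) equals 1 + r·C(n+r−1, r), where C denotes the binomial coefficient. -/
open scoped Classical

namespace POPIpaper

lemma filterMap_filter_eq {γ δ : Type*} (f : γ → Option δ) (p : γ → Bool)
    (h : ∀ x, (f x).isSome → p x) :
    ∀ l : List γ, (l.filter p).filterMap f = l.filterMap f := by
  intro l
  induction l with
  | nil => simp
  | cons a l ih =>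
    by_cases hp : p a
    · rw [List.filter_cons_of_pos hp, List.filterMap_cons, List.filterMap_cons, ih]
    · rw [List.filter_cons_of_neg hp]
      have : f a = none := by
        cases hfa : f a with
        | none => rfl
        | some b => exact absurd (h a (by simp [hfa])) hp
      rw [List.filterMap_cons_none this, ih]

lemma length_filterMap_all_some {γ δ : Type*} (f : γ → Option δ) :
    ∀ l : List γ, (∀ x ∈ l, (f x).isSome) → (l.filterMap f).length = l.length := by
  intro l
  induction l with
  | nil => simp
  | cons a l ih =>
    intro h
    rcases Option.isSome_iff_exists.mp (h a (by simp)) with ⟨b, hb⟩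
    rw [List.filterMap_cons_some hb]
    simp [ih (fun x hx => h x (List.mem_cons_of_mem _ hx))]

lemma sort_eq_filter_finRange {n : ℕ} (A : Finset (Fin n)) :
    A.sort (· ≤ ·) = (List.finRange n).filter (fun x => decide (x ∈ A)) := by
  refine (fun hp h1 h2 => List.Perm.eq_of_pairwise' (r := (· ≤ ·)) h1 h2 hp) ?_ ?_ ?_
  · apply List.perm_of_nodup_nodup_toFinset_eq (Finset.sort_nodup _ _)
      ((List.nodup_finRange n).filter _)
    ext x
    simp [Finset.mem_sort]
  · exact Finset.pairwise_sort _ _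
  · exact List.Pairwise.filter _ ((List.pairwise_lt_finRange n).imp le_of_lt)

noncomputable def enc {n : ℕ} (α : PT n) : List (Fin n) := (List.finRange n).filterMap α

lemma mem_dom {n : ℕ} {α : PT n} {x : Fin n} : x ∈ dom α ↔ (α x).isSome := by
  simp [dom]

lemma enc_length {n : ℕ} (α : PT n) : (enc α).length = (dom α).card := by
  have h1 := filterMap_filter_eq α (fun x => (α x).isSome) (fun x h => h) (List.finRange n)
  set lf := (List.finRange n).filter (fun x => (α x).isSome) with hlf
  have h2 : (lf.filterMap α).length = lf.length :=
    length_filterMap_all_some α lf (by intro x hx; simpa using (List.mem_filter.mp hx).2)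
  have h3 : lf.toFinset = dom α := by
    ext x; simp [hlf, dom, List.mem_filter]
  have h4 : lf.Nodup := (List.nodup_finRange n).filter _
  rw [enc, ← h1, h2, ← h3, List.toFinset_card_of_nodup h4]

noncomputable def dec {n : ℕ} (A : Finset (Fin n)) (L : List (Fin n)) : PT n :=
  fun x => L[(A.sort (· ≤ ·)).idxOf x]?

lemma isSome_getElem?_iff {γ : Type*} (L : List γ) (i : ℕ) :
    (L[i]?).isSome ↔ i < L.length := by
  rcases lt_or_ge i L.length with h | h
  · simp [List.getElem?_eq_getElem h, h]
  · simp [List.getElem?_eq_none h, not_lt.mpr h]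

lemma dec_isSome_iff {n : ℕ} {A : Finset (Fin n)} {L : List (Fin n)} {x : Fin n}
    (h : A.card = L.length) : (dec A L x).isSome ↔ x ∈ A := by
  rw [dec, isSome_getElem?_iff, ← h, ← Finset.length_sort (α := Fin n) (r := (· ≤ ·)),
    List.idxOf_lt_length_iff, Finset.mem_sort]

lemma dec_dom {n : ℕ} {A : Finset (Fin n)} {L : List (Fin n)}
    (h : A.card = L.length) : dom (dec A L) = A := by
  ext x; rw [mem_dom, dec_isSome_iff h]

lemma filterMap_inj_aux {γ δ : Type*} (f g : γ → Option δ) :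
    ∀ l : List γ, (∀ x ∈ l, (f x).isSome = (g x).isSome) →
      l.filterMap f = l.filterMap g → ∀ x ∈ l, f x = g x := by
  intro l
  induction l with
  | nil => intro _ _ x hx; simp at hx
  | cons a l ih =>
    intro hs heq x hx
    cases hfa : f a with
    | none =>
      have hga : g a = none := by
        have := hs a (by simp)
        rw [hfa] at this
        exact Option.not_isSome_iff_eq_none.mp (by simp [← this])
      rw [List.filterMap_cons_none hfa, List.filterMap_cons_none hga] at heq
      rcases List.mem_cons.mp hx with rfl | hx
      · rw [hfa, hga]
      · exact ih (fun y hy => hs y (List.mem_cons_of_mem _ hy)) heq x hx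
    | some b =>
      have hga' : (g a).isSome := by
        have := hs a (by simp); rw [hfa] at this; simp [← this]
      rcases Option.isSome_iff_exists.mp hga' with ⟨c, hga⟩
      rw [List.filterMap_cons_some hfa, List.filterMap_cons_some hga] at heq
      injection heq with h1 h2
      rcases List.mem_cons.mp hx with rfl | hx
      · rw [hfa, hga, h1]
      · exact ih (fun y hy => hs y (List.mem_cons_of_mem _ hy)) h2 x hx

lemma filterMap_indexOf_get {γ : Type*} [DecidableEq γ] :
    ∀ (la L : List γ), la.Nodup → la.length = L.length →
      la.filterMap (fun x => L[la.idxOf x]?) = L := by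
  intro la
  induction la with
  | nil => intro L _ h; cases L with
    | nil => simp
    | cons b L => simp at h
  | cons a la ih =>
    intro L hnd hlen
    cases L with
    | nil => simp at hlen
    | cons b L =>
      rw [List.filterMap_cons]
      have h0 : List.idxOf a (a :: la) = 0 := by simp
      simp only [h0, List.getElem?_cons_zero]
      have : la.filterMap (fun x => (b :: L)[(a :: la).idxOf x]?) =
          la.filterMap (fun x => L[la.idxOf x]?) := by
        apply List.filterMap_congr
        intro x hx
        have hne : x ≠ a := by rintro rfl; exact (List.nodup_cons.mp hnd).1 hx
        have : List.idxOf x (a :: la) = List.idxOf x la + 1 := by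
          simp [List.idxOf_cons, Ne.symm hne]
        rw [this]
        simp
      rw [this, ih L (List.nodup_cons.mp hnd).2 (by simpa using hlen)]

lemma enc_inj {n : ℕ} {α β : PT n} (hd : dom α = dom β) (he : enc α = enc β) : α = β := by
  funext x
  refine filterMap_inj_aux α β (List.finRange n) ?_ he x (List.mem_finRange x)
  intro y _
  have hiff : (α y).isSome ↔ (β y).isSome := by
    rw [← mem_dom, ← mem_dom, hd]
  by_cases h : (α y).isSome
  · rw [h, hiff.mp h]
  · have h2 : ¬(β y).isSome = true := fun hb => h (hiff.mpr hb)
    rw [Bool.not_eq_true] at h h2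
    rw [h, h2]

lemma dec_enc {n : ℕ} {A : Finset (Fin n)} {L : List (Fin n)}
    (h : A.card = L.length) : enc (dec A L) = L := by
  have hfil := filterMap_filter_eq (dec A L) (fun x => decide (x ∈ A))
    (fun x hx => by simpa using (dec_isSome_iff h).mp hx) (List.finRange n)
  rw [enc, ← hfil, ← sort_eq_filter_finRange]
  exact filterMap_indexOf_get _ _ (Finset.sort_nodup _ _) (by rw [Finset.length_sort]; exact h)

lemma dec_inj {n : ℕ} {A : Finset (Fin n)} {L : List (Fin n)}
    (hnd : L.Nodup) (h : A.card = L.length) : Inj (dec A L) := by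
  intro x y z hx hy
  rw [dec] at hx hy
  set la := A.sort (· ≤ ·) with hla
  rcases List.getElem?_eq_some_iff.mp hx with ⟨hix, hgx⟩
  rcases List.getElem?_eq_some_iff.mp hy with ⟨hiy, hgy⟩
  have hieq : la.idxOf x = la.idxOf y :=
    (hnd.getElem_inj_iff).mp (by rw [hgx, hgy])
  have hxl : la.idxOf x < la.length := by rw [Finset.length_sort, h]; exact hix
  have hyl : la.idxOf y < la.length := by rw [Finset.length_sort, h]; exact hiy
  exact (List.idxOf_inj (List.idxOf_lt_length_iff.mp hxl)).mp hieq

lemma dec_memY {n : ℕ} {A : Finset (Fin n)} {L : List (Fin n)} {Y : Finset (Fin n)}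
    (hmem : ∀ y ∈ L, y ∈ Y) : ∀ x y : Fin n, dec A L x = some y → y ∈ Y :=
  fun _ y hxy => hmem y (List.mem_of_getElem? hxy)

lemma enc_nodup {n : ℕ} {α : PT n} (hinj : Inj α) : (enc α).Nodup :=
  List.Nodup.filterMap
    (fun a a' b hb hb' => hinj a a' b (Option.mem_def.mp hb) (Option.mem_def.mp hb'))
    (List.nodup_finRange n)

lemma enc_mem {n : ℕ} {α : PT n} {y : Fin n} (h : y ∈ enc α) : ∃ x, α x = some y := by
  rcases List.mem_filterMap.mp h with ⟨x, _, hx⟩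
  exact ⟨x, hx⟩


noncomputable def LSet {n : ℕ} (Y : Finset (Fin n)) (k : ℕ) : Finset (List (Fin n)) :=
  ((Y.powersetCard k) ×ˢ (Finset.range k)).image
    (fun p => (Finset.sort p.1 (· ≤ ·)).rotate p.2)

lemma card_LSet {n : ℕ} (Y : Finset (Fin n)) (k : ℕ) (hk : 1 ≤ k) :
    (LSet Y k).card = Y.card.choose k * k := by
  rw [LSet, Finset.card_image_of_injOn, Finset.card_product, Finset.card_powersetCard,
    Finset.card_range]
  rintro ⟨B₁, j₁⟩ h1 ⟨B₂, j₂⟩ h2 heq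
  simp only [Finset.mem_coe, Finset.mem_product, Finset.mem_powersetCard, Finset.mem_range] at h1 h2
  simp only at heq
  have hB : B₁ = B₂ := by
    ext x
    have : x ∈ (Finset.sort B₁ (· ≤ ·)).rotate j₁ ↔ x ∈ (Finset.sort B₂ (· ≤ ·)).rotate j₂ := by
      rw [heq]
    simpa [List.mem_rotate, Finset.mem_sort] using this
  subst hB
  have hne : Finset.sort B₁ (· ≤ ·) ≠ [] := by
    intro hcon
    have := Finset.length_sort (α := Fin n) (r := (· ≤ ·)) (s := B₁)
    rw [hcon] at this
    simp [h1.1.2] at this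
    omega
  have := (Finset.sort_nodup B₁ (· ≤ ·)).rotate_congr hne j₁ j₂ heq
  rw [Finset.length_sort, h1.1.2, Nat.mod_eq_of_lt h1.2, Nat.mod_eq_of_lt h2.2] at this
  simp [this]

lemma mem_LSet_iff {n : ℕ} {Y : Finset (Fin n)} {k : ℕ} (hk : 1 ≤ k) {L : List (Fin n)} :
    L ∈ LSet Y k ↔ L.length = k ∧ L.Nodup ∧ (∀ y ∈ L, y ∈ Y) ∧
      ∃ m, (L.rotate m).Pairwise (· ≤ ·) := by
  constructor
  · intro hL
    rcases Finset.mem_image.mp hL with ⟨⟨B, j⟩, hmem, rfl⟩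
    rw [Finset.mem_product, Finset.mem_powersetCard, Finset.mem_range] at hmem
    obtain ⟨⟨hBY, hBcard⟩, hj⟩ := hmem
    refine ⟨by simp [List.length_rotate, Finset.length_sort, hBcard], ?_, ?_, ?_⟩
    · exact List.nodup_rotate.mpr (Finset.sort_nodup _ _)
    · intro y hy
      rw [List.mem_rotate, Finset.mem_sort] at hy
      exact hBY hy
    · refine ⟨k - j, ?_⟩
      rw [List.rotate_rotate, Nat.add_sub_cancel' (le_of_lt hj), ← hBcard,
        ← Finset.length_sort (α := Fin n) (r := (· ≤ ·)), List.rotate_length]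
      exact Finset.pairwise_sort _ _
  · rintro ⟨hlen, hnd, hmemY, m, hsort⟩
    have hk0 : 0 < k := hk
    set B := L.toFinset with hB
    have hBcard : B.card = k := by rw [hB, List.toFinset_card_of_nodup hnd, hlen]
    have hBY : B ⊆ Y := fun x hx => hmemY x (List.mem_toFinset.mp hx)
    have heq : L.rotate m = Finset.sort B (· ≤ ·) := by
      refine (fun hp h1 h2 => List.Perm.eq_of_pairwise' (r := (· ≤ ·)) h1 h2 hp) ?_ ?_ ?_
      · apply List.perm_of_nodup_nodup_toFinset_eq (List.nodup_rotate.mpr hnd)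
          (Finset.sort_nodup _ _)
        rw [Finset.sort_toFinset]
        ext x
        simp [List.mem_rotate, hB]
      · exact hsort
      · exact Finset.pairwise_sort _ _
    refine Finset.mem_image.mpr ⟨⟨B, (k - m % k) % k⟩, ?_, ?_⟩
    · rw [Finset.mem_product, Finset.mem_powersetCard, Finset.mem_range]
      exact ⟨⟨hBY, hBcard⟩, Nat.mod_lt _ hk0⟩
    · simp only
      rw [← heq, List.rotate_rotate]
      have hmlt : m % k < k := Nat.mod_lt _ hk0
      have hzero : (m + (k - m % k) % k) % k = 0 := by
        by_cases h0 : m % k = 0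
        · rw [h0, Nat.sub_zero, Nat.mod_self, Nat.add_zero]
          exact h0
        · have hlt : k - m % k < k := by omega
          rw [Nat.mod_eq_of_lt hlt, Nat.add_mod, Nat.mod_eq_of_lt hlt]
          have : m % k + (k - m % k) = k := by omega
          rw [this, Nat.mod_self]
      have := List.rotate_mod L (m + (k - m % k) % k)
      rw [hlen, hzero, List.rotate_zero] at this
      exact this.symm


noncomputable def FA {n : ℕ} (Y : Finset (Fin n)) (A : Finset (Fin n)) : Finset (PT n) :=
  Finset.univ.filter (fun α => α ∈ POPI n Y ∧ dom α = A)

lemma card_FA_pos {n : ℕ} (Y A : Finset (Fin n)) (hA : A.Nonempty) :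
    (FA Y A).card = (LSet Y A.card).card := by
  have hk : 1 ≤ A.card := Finset.card_pos.mpr hA
  apply Finset.card_bij (fun α _ => enc α)
  · intro α hα
    rw [FA, Finset.mem_filter] at hα
    obtain ⟨_, ⟨hinj, hop, hY⟩, hdom⟩ := hα
    rw [mem_LSet_iff hk]
    refine ⟨by rw [enc_length, hdom], enc_nodup hinj, ?_, hop⟩
    intro y hy
    rcases enc_mem hy with ⟨x, hx⟩
    exact hY x y hx
  · intro α hα β hβ heq
    rw [FA, Finset.mem_filter] at hα hβ
    exact enc_inj (hα.2.2.trans hβ.2.2.symm) heq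
  · intro L hL
    rw [mem_LSet_iff hk] at hL
    obtain ⟨hlen, hnd, hmemY, m, hsort⟩ := hL
    have h : A.card = L.length := hlen.symm
    refine ⟨dec A L, ?_, dec_enc h⟩
    rw [FA, Finset.mem_filter]
    refine ⟨Finset.mem_univ _, ⟨dec_inj hnd h, ?_, dec_memY hmemY⟩, dec_dom h⟩
    refine ⟨m, ?_⟩
    have := dec_enc h
    rw [enc] at this
    rw [this]
    exact hsort

lemma card_FA_empty {n : ℕ} (Y : Finset (Fin n)) : (FA Y ∅).card = 1 := by
  have : FA Y ∅ = {fun _ => none} := by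
    ext α
    rw [FA, Finset.mem_filter, Finset.mem_singleton]
    constructor
    · rintro ⟨-, -, hdom⟩
      funext x
      have : x ∉ dom α := by rw [hdom]; exact Finset.notMem_empty x
      rw [mem_dom] at this
      exact Option.not_isSome_iff_eq_none.mp this
    · rintro rfl
      have hempt : enc (n := n) (fun _ => none) = [] := by
        simp [enc]
      refine ⟨Finset.mem_univ _, ⟨?_, ?_, ?_⟩, ?_⟩
      · intro x y z hx; simp at hx
      · exact ⟨0, by rw [show (List.finRange n).filterMap (fun _ => none) = enc
          (n := n) (fun _ => none) from rfl, hempt]; simp⟩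
      · intro x y hx; simp at hx
      · ext x; rw [mem_dom]; simp
  rw [this, Finset.card_singleton]

lemma card_FA {n r : ℕ} (Y : Finset (Fin n)) (hr : Y.card = r) (A : Finset (Fin n)) :
    (FA Y A).card = if A.card = 0 then 1 else r.choose A.card * A.card := by
  by_cases hA : A = ∅
  · subst hA; simp [card_FA_empty]
  · have hne : A.Nonempty := Finset.nonempty_iff_ne_empty.mpr hA
    have hk : 1 ≤ A.card := Finset.card_pos.mpr hne
    rw [if_neg (by omega), card_FA_pos Y A hne, card_LSet Y A.card hk, hr]

lemma vandermonde_shift (n r : ℕ) (h1 : 1 ≤ r) :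
    ∑ j ∈ Finset.range n, n.choose (j + 1) * (r - 1).choose j = (n + r - 1).choose r := by
  have key : (n + (r - 1)).choose r = ∑ j ∈ Finset.range r, n.choose (j + 1) * (r - 1).choose j := by
    rw [Nat.add_choose_eq, Finset.Nat.sum_antidiagonal_eq_sum_range_succ_mk,
      Finset.sum_range_succ']
    have h0 : (r - 1).choose (r - 0) = 0 := by
      apply Nat.choose_eq_zero_of_lt
      omega
    rw [h0, Nat.mul_zero, add_zero]
    apply Finset.sum_congr rfl
    intro j hj
    rw [Finset.mem_range] at hj
    have : r - (j + 1) = (r - 1) - j := by omega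
    rw [this, Nat.choose_symm (by omega)]
  have ext1 : ∑ j ∈ Finset.range n, n.choose (j + 1) * (r - 1).choose j =
      ∑ j ∈ Finset.range (n + r), n.choose (j + 1) * (r - 1).choose j := by
    apply Finset.sum_subset (Finset.range_subset_range.mpr (by omega))
    intro j _ hj
    rw [Finset.mem_range, not_lt] at hj
    rw [Nat.choose_eq_zero_of_lt (by omega)]
    ring
  have ext2 : ∑ j ∈ Finset.range r, n.choose (j + 1) * (r - 1).choose j =
      ∑ j ∈ Finset.range (n + r), n.choose (j + 1) * (r - 1).choose j := by
    apply Finset.sum_subset (Finset.range_subset_range.mpr (by omega))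
    intro j _ hj
    rw [Finset.mem_range, not_lt] at hj
    have : (r - 1).choose j = 0 := Nat.choose_eq_zero_of_lt (by omega)
    rw [this]
    ring
  rw [ext1, ← ext2, ← key]
  congr 1
  omega

lemma arithmetic_final (n r : ℕ) (h1 : 1 ≤ r) :
    ∑ j ∈ Finset.range (n + 1), n.choose j * (if j = 0 then 1 else r.choose j * j) =
      1 + r * (n + r - 1).choose r := by
  rw [Finset.sum_range_succ']
  simp only [Nat.add_eq_zero, one_ne_zero, and_false, if_false, if_pos rfl,
    Nat.choose_zero_right, one_mul]
  rw [add_comm]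
  congr 1
  have hterm : ∀ j, r.choose (j + 1) * (j + 1) = r * (r - 1).choose j := by
    intro j
    have h := Nat.add_one_mul_choose_eq (r - 1) j
    simp only [Nat.succ_eq_add_one, Nat.sub_add_cancel h1] at h
    exact h.symm
  calc ∑ j ∈ Finset.range n, n.choose (j + 1) * (r.choose (j + 1) * (j + 1))
      = ∑ j ∈ Finset.range n, r * (n.choose (j + 1) * (r - 1).choose j) := by
        apply Finset.sum_congr rfl
        intro j _
        rw [hterm j]
        ring
    _ = r * ∑ j ∈ Finset.range n, n.choose (j + 1) * (r - 1).choose j := by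
        rw [Finset.mul_sum]
    _ = r * (n + r - 1).choose r := by rw [vandermonde_shift n r h1]



/-- `|POPI_n(Y)| = 1 + r·C(n+r-1, r)` where `r = |Y|`. -/
theorem card_POPI {n r : ℕ} (Y : Finset (Fin n)) (hr : Y.card = r) (h1 : 1 ≤ r) :
    Set.ncard (POPI n Y) = 1 + r * (n + r - 1).choose r := by
  classical
  set F : Finset (PT n) := Finset.univ.filter (fun α => α ∈ POPI n Y) with hF
  have hset : POPI n Y = ↑F := by
    ext α; simp [hF]
  rw [hset, Set.ncard_coe_finset]
  have hfib : F.card = ∑ A ∈ (Finset.univ : Finset (Finset (Fin n))), (FA Y A).card := by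
    rw [Finset.card_eq_sum_card_fiberwise (f := dom) (t := Finset.univ)
      (fun x _ => Finset.mem_univ _)]
    apply Finset.sum_congr rfl
    intro A _
    congr 1
    rw [hF, Finset.filter_filter, FA]
  rw [hfib]
  rw [Finset.sum_congr rfl (fun A _ => card_FA Y hr A)]
  rw [← Finset.powerset_univ, Finset.sum_powerset]
  have hcard : (Finset.univ : Finset (Fin n)).card = n := by simp
  rw [hcard]
  have hin : ∀ j ∈ Finset.range (n + 1),
      (∑ A ∈ Finset.powersetCard j (Finset.univ : Finset (Fin n)),
        (if A.card = 0 then 1 else r.choose A.card * A.card)) =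
      n.choose j * (if j = 0 then 1 else r.choose j * j) := by
    intro j _
    rw [Finset.sum_congr rfl (fun A hA => by
      rw [(Finset.mem_powersetCard.mp hA).2]),
      Finset.sum_const, Finset.card_powersetCard, hcard, smul_eq_mul]
  rw [Finset.sum_congr rfl hin, arithmetic_final n r h1]


end POPIpaper
end

section
/- For 1 ≤ r ≤ n, the combinatorial identity ∑_{k=1}^{r} k·C(r,k)·C(n,k) = r·C(n+r−1, r) holds, where C denotes the binomial coefficient. -/
open scoped Classical

namespace POPIpaper

/-- `∑_{k=1}^{r} k·C(r,k)·C(n,k) = r·C(n+r-1, r)`. -/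
theorem sum_choose_identity (n r : ℕ) (h1 : 1 ≤ r) (h2 : r ≤ n) :
    ∑ k ∈ Finset.Icc 1 r, k * r.choose k * n.choose k
      = r * (n + r - 1).choose r := by
  obtain ⟨m, rfl⟩ : ∃ m, r = m + 1 := ⟨r - 1, (Nat.succ_pred_eq_of_pos h1).symm⟩
  have key : ∀ k ∈ Finset.Icc 1 (m + 1),
      k * (m + 1).choose k * n.choose k = (m + 1) * (m.choose (k - 1) * n.choose k) := by
    intro k hk
    simp only [Finset.mem_Icc] at hk
    obtain ⟨j, rfl⟩ : ∃ j, k = j + 1 := ⟨k - 1, (Nat.succ_pred_eq_of_pos hk.1).symm⟩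
    have h := Nat.add_one_mul_choose_eq m j
    rw [Nat.add_sub_cancel, ← mul_assoc, h]
    ring
  rw [Finset.sum_congr rfl key, ← Finset.mul_sum]
  have : n + (m + 1) - 1 = n + m := by omega
  rw [this]
  congr 1
  have hV : (n + m).choose (m + 1)
      = ∑ ij ∈ Finset.HasAntidiagonal.antidiagonal (m + 1), n.choose ij.1 * m.choose ij.2 :=
    Nat.add_choose_eq n m (m + 1)
  rw [hV, Finset.Nat.sum_antidiagonal_eq_sum_range_succ (fun a b => n.choose a * m.choose b)]
  simp only [Nat.succ_eq_add_one]
  rw [Finset.range_eq_Ico, show m + 1 + 1 = m + 2 from rfl]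
  have hsplit : Finset.Ico 0 (m + 2) = insert 0 (Finset.Icc 1 (m + 1)) := by
    ext x
    simp [Finset.mem_Ico, Finset.mem_Icc]
    omega
  rw [hsplit, Finset.sum_insert (by simp)]
  have h0 : n.choose 0 * m.choose (m + 1 - 0) = 0 := by
    simp [Nat.choose_eq_zero_of_lt (by omega : m < m + 1)]
  rw [h0, zero_add]
  apply Finset.sum_congr rfl
  intro k hk
  simp only [Finset.mem_Icc] at hk
  have : m + 1 - k = m - (k - 1) := by omega
  rw [this, Nat.choose_symm (by omega)]
  ring

end POPIpaper
end

section
/- Let Φ : POPI_n(Y) → POPI_n(Z) be a semigroup isomorphism, where Y, Z are nonempty subsets of Ω_n. Then there exists a bijection φ : Y → Z such that for each y ∈ Y, Φ maps the partial identity on {y} to the partial identity on {yφ}. In particular |Y| = |Z|. -/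
open scoped Classical

namespace POPIpaper

section Aux

variable {n : ℕ}

lemma idp_some {A : Finset (Fin n)} {x : Fin n} (h : x ∈ A) : idp A x = some x := by
  simp [idp, h]

lemma idp_none {A : Finset (Fin n)} {x : Fin n} (h : x ∉ A) : idp A x = none := by
  simp [idp, h]

lemma idp_eq_some {A : Finset (Fin n)} {x z : Fin n} (h : idp A x = some z) :
    x = z ∧ x ∈ A := by
  unfold idp at h
  split at h
  · exact ⟨Option.some.inj h, by assumption⟩
  · exact absurd h (by simp)

lemma idp_injective : Function.Injective (idp (n := n)) := by
  intro A B h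
  ext x
  constructor <;> intro hx
  · by_contra hB
    have := congrFun h x
    rw [idp_some hx, idp_none hB] at this
    exact absurd this (by simp)
  · by_contra hA
    have := congrFun h x
    rw [idp_none hA, idp_some hx] at this
    exact absurd this (by simp)

lemma comp_idp_idp (A B : Finset (Fin n)) : comp (idp A) (idp B) = idp (A ∩ B) := by
  funext x
  by_cases hA : x ∈ A <;> by_cases hB : x ∈ B <;> simp [comp, idp, hA, hB]

lemma idp_empty_comp (α : PT n) : comp (idp ∅) α = idp ∅ := by
  funext x; simp [comp, idp]

lemma comp_idp_empty (α : PT n) : comp α (idp ∅) = idp ∅ := by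
  funext x; cases α x <;> simp [comp, idp]

lemma comp_idp_of_im_subset {α : PT n} {A : Finset (Fin n)}
    (h : ∀ x y, α x = some y → y ∈ A) : comp α (idp A) = α := by
  funext x
  cases hx : α x with
  | none => simp [comp, hx]
  | some y => simp [comp, hx, idp_some (h x y hx)]

lemma sorted_finRange : (List.finRange n).Pairwise (· ≤ ·) :=
  (List.pairwise_lt_finRange n).imp le_of_lt

lemma filterMap_sublist_self {f : Fin n → Option (Fin n)}
    (hf : ∀ a, f a = none ∨ f a = some a) (l : List (Fin n)) : List.Sublist (l.filterMap f) l := by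
  induction l with
  | nil => simp
  | cons a t ih =>
    rcases hf a with h | h
    · rw [List.filterMap_cons, h]
      exact ih.trans (List.sublist_cons_self a t)
    · rw [List.filterMap_cons, h]
      exact ih.cons₂ a

lemma idp_none_or_some (A : Finset (Fin n)) :
    ∀ a, idp A a = none ∨ idp A a = some a := by
  intro a
  by_cases h : a ∈ A
  · exact Or.inr (idp_some h)
  · exact Or.inl (idp_none h)

lemma cycSorted_sublist {l₁ l₂ : List (Fin n)} (h : List.Sublist l₁ l₂)
    (h₂ : ∃ k, (l₂.rotate k).Pairwise (· ≤ ·)) : ∃ k, (l₁.rotate k).Pairwise (· ≤ ·) := by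
  obtain ⟨k, hk⟩ := h₂
  rcases eq_or_ne l₂ [] with rfl | hne
  · have : l₁ = [] := List.sublist_nil.mp h
    exact ⟨0, by simp [this]⟩
  set m := k % l₂.length with hm
  have hmlt : m < l₂.length := Nat.mod_lt _ (List.length_pos_iff.mpr hne)
  have hk' : (l₂.rotate m).Pairwise (· ≤ ·) := by rw [hm, List.rotate_mod]; exact hk
  have hsplit : l₂.rotate m = l₂.drop m ++ l₂.take m :=
    List.rotate_eq_drop_append_take hmlt.le
  have h' : List.Sublist l₁ (l₂.take m ++ l₂.drop m) := by rw [List.take_append_drop]; exact h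
  obtain ⟨a, b, rfl, ha, hb⟩ := List.sublist_append_iff.mp h'
  refine ⟨a.length, ?_⟩
  have hlen : a.length ≤ (a ++ b).length := by simp
  rw [List.rotate_eq_drop_append_take hlen, List.drop_left, List.take_left]
  have hsub : List.Sublist (b ++ a) (l₂.drop m ++ l₂.take m) := hb.append ha
  rw [← hsplit] at hsub
  exact hk'.sublist hsub

lemma idp_mem_POPI {Y A : Finset (Fin n)} (h : A ⊆ Y) : idp A ∈ POPI n Y := by
  refine ⟨?_, ?_, ?_⟩
  · intro x y z hx hy
    obtain ⟨rfl, _⟩ := idp_eq_some hx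
    obtain ⟨rfl, _⟩ := idp_eq_some hy
    rfl
  · refine ⟨0, ?_⟩
    rw [List.rotate_zero]
    exact sorted_finRange.sublist (filterMap_sublist_self (idp_none_or_some A) _)
  · intro x y hxy
    obtain ⟨rfl, hx⟩ := idp_eq_some hxy
    exact h hx

lemma comp_idp_left_apply (A : Finset (Fin n)) (α : PT n) (x : Fin n) :
    comp (idp A) α x = if x ∈ A then α x else none := by
  by_cases h : x ∈ A <;> simp [comp, idp, h]

lemma comp_idp_left_eq_some {A : Finset (Fin n)} {α : PT n} {x z : Fin n}
    (h : comp (idp A) α x = some z) : α x = some z ∧ x ∈ A := by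
  rw [comp_idp_left_apply] at h
  split at h
  · exact ⟨h, by assumption⟩
  · exact absurd h (by simp)

lemma comp_idp_right_eq_some {α : PT n} {A : Finset (Fin n)} {x z : Fin n}
    (h : comp α (idp A) x = some z) : α x = some z ∧ z ∈ A := by
  unfold comp at h
  cases hx : α x with
  | none => rw [hx] at h; exact absurd h (by simp)
  | some w =>
    rw [hx] at h
    simp only [Option.bind_some] at h
    obtain ⟨h1, hw⟩ := idp_eq_some h
    exact ⟨by rw [h1], by rwa [← h1]⟩

lemma comp_idp_left_mem {Y : Finset (Fin n)} {α : PT n} (hα : α ∈ POPI n Y)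
    (A : Finset (Fin n)) : comp (idp A) α ∈ POPI n Y := by
  obtain ⟨hinj, hop, him⟩ := hα
  refine ⟨?_, ?_, ?_⟩
  · intro x y z hx hy
    exact hinj x y z (comp_idp_left_eq_some hx).1 (comp_idp_left_eq_some hy).1
  · have heq : (List.finRange n).filterMap (comp (idp A) α)
        = ((List.finRange n).filterMap (idp A)).filterMap α := by
      rw [List.filterMap_filterMap]; rfl
    refine cycSorted_sublist ?_ hop
    rw [heq]
    exact (filterMap_sublist_self (idp_none_or_some A) _).filterMap α
  · intro x y hxy
    exact him x y (comp_idp_left_eq_some hxy).1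

lemma comp_idp_right_mem {Y : Finset (Fin n)} {α : PT n} (hα : α ∈ POPI n Y)
    (A : Finset (Fin n)) : comp α (idp A) ∈ POPI n Y := by
  obtain ⟨hinj, hop, him⟩ := hα
  refine ⟨?_, ?_, ?_⟩
  · intro x y z hx hy
    exact hinj x y z (comp_idp_right_eq_some hx).1 (comp_idp_right_eq_some hy).1
  · have heq : (List.finRange n).filterMap (comp α (idp A))
        = ((List.finRange n).filterMap α).filterMap (idp A) := by
      rw [List.filterMap_filterMap]; rfl
    refine cycSorted_sublist ?_ hop
    rw [heq]
    exact filterMap_sublist_self (idp_none_or_some A) _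
  · intro x y hxy
    exact him x y (comp_idp_right_eq_some hxy).1

lemma idempotent_eq_idp {α : PT n} (hinj : Inj α) (h : comp α α = α) :
    ∃ B : Finset (Fin n), α = idp B := by
  refine ⟨dom α, funext fun x => ?_⟩
  cases hx : α x with
  | none =>
    rw [idp_none]
    simp [dom, hx]
  | some y =>
    have h2 : α y = some y := by
      have hc := congrFun h x
      unfold comp at hc
      rw [hx, Option.bind_some] at hc
      exact hc
    have hxy : x = y := hinj x y y hx h2
    subst hxy
    rw [idp_some]
    simp [dom, hx]

end Aux

lemma eq_idp_empty_of_forall_none {n : ℕ} {α : PT n} (h : ∀ x, α x = none) :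
    α = idp ∅ := by
  funext x; rw [h x, idp_none (Finset.notMem_empty x)]

lemma exists_some_of_ne_idp_empty {n : ℕ} {α : PT n} (h : α ≠ idp ∅) :
    ∃ x w, α x = some w := by
  by_contra hno
  push_neg at hno
  exact h (eq_idp_empty_of_forall_none fun x => by
    cases hc : α x with
    | none => rfl
    | some w => exact absurd hc (hno x w))

/-- an isomorphism `Φ : POPI_n(Y) → POPI_n(Z)` induces a bijection
`φ : Y → Z` with `id_{y}Φ = id_{yφ}`; in particular `|Y| = |Z|`. -/
theorem iso_induces_bijection {n : ℕ} (Y Z : Finset (Fin n))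
    (hY : Y.Nonempty) (hZ : Z.Nonempty) (Φ : PT n → PT n)
    (hΦ : IsIso (POPI n Y) (POPI n Z) Φ) :
    ∃ φ : Fin n → Fin n, Set.BijOn φ ↑Y ↑Z ∧
      (∀ y ∈ Y, Φ (idp {y}) = idp {φ y}) ∧ Y.card = Z.card := by
  obtain ⟨hbij, hhom⟩ := hΦ
  have h0S : idp (∅ : Finset (Fin n)) ∈ POPI n Y := idp_mem_POPI (Finset.empty_subset Y)
  have h0T : idp (∅ : Finset (Fin n)) ∈ POPI n Z := idp_mem_POPI (Finset.empty_subset Z)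
  have hYS : idp Y ∈ POPI n Y := idp_mem_POPI (subset_refl Y)
  -- Φ sends the zero to the zero
  have hΦ0 : Φ (idp ∅) = idp ∅ := by
    obtain ⟨γ, hγS, hγ⟩ := hbij.surjOn h0T
    calc Φ (idp ∅) = Φ (comp (idp ∅) γ) := by rw [idp_empty_comp]
      _ = comp (Φ (idp ∅)) (Φ γ) := hhom _ h0S _ hγS
      _ = comp (Φ (idp ∅)) (idp ∅) := by rw [hγ]
      _ = idp ∅ := comp_idp_empty _
  -- Φ sends idempotents to partial identities on subsets of Z
  have key : ∀ A : Finset (Fin n), A ⊆ Y →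
      ∃ B : Finset (Fin n), B ⊆ Z ∧ Φ (idp A) = idp B := by
    intro A hA
    have hAS : idp A ∈ POPI n Y := idp_mem_POPI hA
    have hT : Φ (idp A) ∈ POPI n Z := hbij.mapsTo hAS
    have hid : comp (Φ (idp A)) (Φ (idp A)) = Φ (idp A) := by
      rw [← hhom _ hAS _ hAS, comp_idp_idp, Finset.inter_self]
    obtain ⟨B, hB⟩ := idempotent_eq_idp hT.1 hid
    refine ⟨B, ?_, hB⟩
    intro b hb
    exact hT.2.2 b b (by rw [hB, idp_some hb])
  -- Φ (idp Y) = idp Z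
  have hΦY : Φ (idp Y) = idp Z := by
    obtain ⟨B, hBZ, hB⟩ := key Y (subset_refl Y)
    obtain ⟨γ, hγS, hγ⟩ := hbij.surjOn (idp_mem_POPI (subset_refl Z))
    have hγY : comp γ (idp Y) = γ := comp_idp_of_im_subset hγS.2.2
    have hZZB : idp Z = idp (Z ∩ B) := by
      calc idp Z = Φ γ := hγ.symm
        _ = Φ (comp γ (idp Y)) := by rw [hγY]
        _ = comp (Φ γ) (Φ (idp Y)) := hhom _ hγS _ hYS
        _ = comp (idp Z) (idp B) := by rw [hγ, hB]
        _ = idp (Z ∩ B) := comp_idp_idp _ _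
    have hZB : Z = Z ∩ B := idp_injective hZZB
    have hBeq : B = Z := by
      apply subset_antisymm hBZ
      intro z hz
      have : z ∈ Z ∩ B := by rw [← hZB]; exact hz
      exact (Finset.mem_inter.mp this).2
    rw [hB, hBeq]
  -- main step: if z ∈ Z belongs to the set B with Φ(idp {y}) = idp B, then B = {z}
  have main : ∀ y ∈ Y, ∀ z ∈ Z, ∀ B : Finset (Fin n),
      Φ (idp {y}) = idp B → z ∈ B → Φ (idp {y}) = idp {z} := by
    intro y hy z hzZ B hB hzB
    have hyS : idp {y} ∈ POPI n Y := idp_mem_POPI (Finset.singleton_subset_iff.mpr hy)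
    obtain ⟨γ, hγS, hγ⟩ := hbij.surjOn (idp_mem_POPI (Finset.singleton_subset_iff.mpr hzZ))
    have hδS : comp (idp {y}) γ ∈ POPI n Y := comp_idp_left_mem hγS {y}
    have hΦδ : Φ (comp (idp {y}) γ) = idp {z} := by
      rw [hhom _ hyS _ hγS, hB, hγ, comp_idp_idp]
      exact congrArg idp (Finset.inter_eq_right.mpr (Finset.singleton_subset_iff.mpr hzB))
    have hεS : comp (comp (idp {y}) γ) (idp {y}) ∈ POPI n Y := comp_idp_right_mem hδS {y}
    have hΦε : Φ (comp (comp (idp {y}) γ) (idp {y})) = idp {z} := by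
      rw [hhom _ hδS _ hyS, hΦδ, hB, comp_idp_idp]
      exact congrArg idp (Finset.inter_eq_left.mpr (Finset.singleton_subset_iff.mpr hzB))
    have hεne : comp (comp (idp {y}) γ) (idp {y}) ≠ idp ∅ := by
      intro hcon
      have h2 : Φ (comp (comp (idp {y}) γ) (idp {y})) = Φ (idp ∅) := by rw [hcon]
      rw [hΦε, hΦ0] at h2
      have h3 := idp_injective h2
      simpa using h3
    obtain ⟨x, w, hxw⟩ := exists_some_of_ne_idp_empty hεne
    obtain ⟨hδx, hwy⟩ := comp_idp_right_eq_some hxw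
    have hw : w = y := Finset.mem_singleton.mp hwy
    obtain ⟨hγx, hxy⟩ := comp_idp_left_eq_some hδx
    have hx : x = y := Finset.mem_singleton.mp hxy
    have hγy : γ y = some y := by rw [← hx, hγx, hw, hx]
    have hδeq : comp (idp {y}) γ = idp {y} := by
      funext u
      by_cases hu : u ∈ ({y} : Finset (Fin n))
      · have hu' : u = y := Finset.mem_singleton.mp hu
        subst hu'
        rw [idp_some hu, comp_idp_left_apply, if_pos hu, hγy]
      · rw [idp_none hu, comp_idp_left_apply, if_neg hu]
    rw [← hδeq]
    exact hΦδ
  -- for each y ∈ Y there is z ∈ Z with Φ (idp {y}) = idp {z}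
  have exu : ∀ y ∈ Y, ∃ z ∈ Z, Φ (idp {y}) = idp {z} := by
    intro y hy
    obtain ⟨B, hBZ, hB⟩ := key {y} (Finset.singleton_subset_iff.mpr hy)
    have hBne : B.Nonempty := by
      rcases B.eq_empty_or_nonempty with rfl | h
      · exfalso
        have h2 : Φ (idp {y}) = Φ (idp ∅) := by rw [hB, hΦ0]
        have h3 := hbij.injOn (idp_mem_POPI (Finset.singleton_subset_iff.mpr hy)) h0S h2
        have h4 := idp_injective h3
        simpa using h4
      · exact h
    obtain ⟨z, hz⟩ := hBne
    exact ⟨z, hBZ hz, main y hy z (hBZ hz) B hB hz⟩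
  -- define φ
  choose! f hf1 hf2 using exu
  set φ : Fin n → Fin n := fun y => if y ∈ Y then f y else y with hφdef
  have hφspec : ∀ y ∈ Y, φ y ∈ Z ∧ Φ (idp {y}) = idp {φ y} := by
    intro y hy
    have : φ y = f y := by rw [hφdef]; simp [hy]
    rw [this]
    exact ⟨hf1 y hy, hf2 y hy⟩
  have hmaps : Set.MapsTo φ ↑Y ↑Z := by
    intro a ha
    exact Finset.mem_coe.mpr (hφspec a (Finset.mem_coe.mp ha)).1
  have hinj : Set.InjOn φ ↑Y := by
    intro a ha b hb hab
    have ha' := Finset.mem_coe.mp ha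
    have hb' := Finset.mem_coe.mp hb
    have h1 : Φ (idp {a}) = Φ (idp {b}) := by
      rw [(hφspec a ha').2, (hφspec b hb').2, hab]
    have h2 := hbij.injOn (idp_mem_POPI (Finset.singleton_subset_iff.mpr ha'))
      (idp_mem_POPI (Finset.singleton_subset_iff.mpr hb')) h1
    have h3 := idp_injective h2
    exact Finset.singleton_injective h3
  have hsurj : Set.SurjOn φ ↑Y ↑Z := by
    intro z hz
    have hzZ := Finset.mem_coe.mp hz
    obtain ⟨γ, hγS, hγ⟩ := hbij.surjOn (idp_mem_POPI (Finset.singleton_subset_iff.mpr hzZ))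
    have hδS : comp (idp Y) γ ∈ POPI n Y := comp_idp_left_mem hγS Y
    have hΦδ : Φ (comp (idp Y) γ) = idp {z} := by
      rw [hhom _ hYS _ hγS, hΦY, hγ, comp_idp_idp]
      exact congrArg idp (Finset.inter_eq_right.mpr (Finset.singleton_subset_iff.mpr hzZ))
    have hδne : comp (idp Y) γ ≠ idp ∅ := by
      intro hcon
      rw [hcon, hΦ0] at hΦδ
      have h3 := idp_injective hΦδ.symm
      simpa using h3
    obtain ⟨x, w, hxw⟩ := exists_some_of_ne_idp_empty hδne
    obtain ⟨hγx, hxY⟩ := comp_idp_left_eq_some hxw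
    -- show φ x = z
    have hδ2S : comp (idp {x}) γ ∈ POPI n Y := comp_idp_left_mem hγS {x}
    have hxS : idp {x} ∈ POPI n Y := idp_mem_POPI (Finset.singleton_subset_iff.mpr hxY)
    have hΦδ2 : Φ (comp (idp {x}) γ) = idp ({φ x} ∩ {z}) := by
      rw [hhom _ hxS _ hγS, (hφspec x hxY).2, hγ, comp_idp_idp]
    have hδ2ne : comp (idp {x}) γ ≠ idp ∅ := by
      intro hcon
      have : comp (idp {x}) γ x = none := by rw [hcon, idp_none (Finset.notMem_empty x)]
      rw [comp_idp_left_apply, if_pos (Finset.mem_singleton_self x), hγx] at this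
      exact absurd this (by simp)
    have hφxz : φ x = z := by
      by_contra hne
      apply hδ2ne
      apply hbij.injOn hδ2S h0S
      rw [hΦδ2, hΦ0]
      congr 1
      rw [Finset.singleton_inter_of_notMem (by simpa using hne)]
    exact ⟨x, Finset.mem_coe.mpr hxY, hφxz⟩
  have hbijφ : Set.BijOn φ ↑Y ↑Z := ⟨hmaps, hinj, hsurj⟩
  have himg : Y.image φ = Z := by
    apply Finset.coe_injective
    rw [Finset.coe_image, hbijφ.image_eq]
  refine ⟨φ, hbijφ, fun y hy => (hφspec y hy).2, ?_⟩
  rw [← himg]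
  exact (Finset.card_image_of_injOn hinj).symm

end POPIpaper
end
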